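/- arXiv:2205.05947 — 4 statements merged into one kernel-verified Lean document; each statement's English description precedes it below -/
import Mathlib

section
/- If a finite simple graph G admits an interval edge-coloring, then the edge-chromatic number of G equals its maximum degree Δ(G) (i.e., G is Class 1). -/
/-- `c` is an interval edge-coloring of `G`: a proper edge-coloring (adjacent edges get
distinct colors) such that at every vertex the set of incident colors is a set of
consecutive integers. -/
def IsIntervalColoring {V : Type*} (G : SimpleGraph V) (c : Sym2 V → ℤ) : Prop :=
  (∀ e ∈ G.edgeSet, ∀ f ∈ G.edgeSet, e ≠ f → (∃ v, v ∈ e ∧ v ∈ f) → c e ≠ c f) ∧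
  (∀ v : V, ∀ x y z : ℤ, x ≤ y → y ≤ z →
    (∃ e ∈ G.edgeSet, v ∈ e ∧ c e = x) → (∃ e ∈ G.edgeSet, v ∈ e ∧ c e = z) →
    ∃ e ∈ G.edgeSet, v ∈ e ∧ c e = y)

/-- `G` admits an interval edge-coloring. -/
def IntervalColorable {V : Type*} (G : SimpleGraph V) : Prop :=
  ∃ c : Sym2 V → ℤ, IsIntervalColoring G c

/-- The interval thickness of `G` is at most `k`: the edge set of `G` can be partitioned
into `k` classes, each of which spans an interval colorable graph. -/
def IntervalThicknessLE {V : Type*} (G : SimpleGraph V) (k : ℕ) : Prop :=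
  ∃ f : Sym2 V → Fin k,
    ∀ i : Fin k,
      IntervalColorable (SimpleGraph.fromEdgeSet {e | e ∈ G.edgeSet ∧ f e = i})

/-- The density of the pair `(X, Y)` in `G`, as a real number. -/
noncomputable def dens {V : Type*} (G : SimpleGraph V) [DecidableRel G.Adj]
    (X Y : Finset V) : ℝ :=
  (G.edgeDensity X Y : ℝ)

/-- `(X, Y)` is an `ε`-regular pair in `G`:
`|d(X,Y) - d(A,B)| ≤ ε` for all `A ⊆ X`, `B ⊆ Y` with `|A| ≥ ε|X|`, `|B| ≥ ε|Y|`. -/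
def EpsRegular {V : Type*} (G : SimpleGraph V) [DecidableRel G.Adj]
    (ε : ℝ) (X Y : Finset V) : Prop :=
  ∀ A ⊆ X, ∀ B ⊆ Y, ε * X.card ≤ A.card → ε * Y.card ≤ B.card →
    |dens G X Y - dens G A B| ≤ ε

lemma interval_key {V : Type*} [Fintype V] [DecidableEq V] (G : SimpleGraph V) [DecidableRel G.Adj]
    (c : Sym2 V → ℤ) (hc : IsIntervalColoring G c) (v : V)
    {e f : Sym2 V} (he : e ∈ G.edgeSet) (hf : f ∈ G.edgeSet)
    (hve : v ∈ e) (hvf : v ∈ f) (hle : c f ≤ c e) :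
    (c e - c f).natAbs + 1 ≤ G.degree v := by
  have hsub : Finset.Icc (c f) (c e) ⊆ (G.incidenceFinset v).image c := by
    intro y hy
    rw [Finset.mem_Icc] at hy
    obtain ⟨g, hg, hvg, hcg⟩ := hc.2 v (c f) y (c e) hy.1 hy.2
      ⟨f, hf, hvf, rfl⟩ ⟨e, he, hve, rfl⟩
    exact Finset.mem_image.2 ⟨g, (SimpleGraph.mem_incidenceFinset (G := G) (v := v) _).2 ⟨hg, hvg⟩, hcg⟩
  have h1 := Finset.card_le_card hsub
  have h2 := Finset.card_image_le (f := c) (s := G.incidenceFinset v)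
  rw [Int.card_Icc] at h1
  rw [G.card_incidenceFinset_eq_degree] at h2
  omega

/-- If `G` admits an interval edge-coloring, then its edge-chromatic number equals
its maximum degree, i.e. `Δ(G)` is the least number of colors of a proper edge-coloring. -/
theorem stmt2 {V : Type*} [Fintype V] [DecidableEq V] (G : SimpleGraph V)
    [DecidableRel G.Adj] (h : IntervalColorable G) :
    IsLeast {n : ℕ | ∃ C : G.edgeSet → Fin n,
        ∀ e f : G.edgeSet, e ≠ f →
          (∃ v, v ∈ (e : Sym2 V) ∧ v ∈ (f : Sym2 V)) → C e ≠ C f}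
      G.maxDegree := by
  obtain ⟨c, hc⟩ := h
  have hpos : ∀ e ∈ G.edgeSet, 0 < G.maxDegree := by
    intro e he
    induction e with
    | h a b =>
      have hd : 0 < G.degree a := by
        rw [G.degree_pos_iff_exists_adj]
        exact ⟨b, he⟩
      exact lt_of_lt_of_le hd (G.degree_le_maxDegree a)
  constructor
  · refine ⟨fun e => ⟨((c e.1) % (G.maxDegree : ℤ)).toNat, ?_⟩, ?_⟩
    · have hD : (0 : ℤ) < (G.maxDegree : ℤ) := by exact_mod_cast hpos e.1 e.2
      have h0 := Int.emod_nonneg (c e.1) (ne_of_gt hD)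
      have h1 := Int.emod_lt_of_pos (c e.1) hD
      omega
    · rintro e f hne ⟨v, hve, hvf⟩
      intro hCeq
      have hD : (0 : ℤ) < (G.maxDegree : ℤ) := by exact_mod_cast hpos e.1 e.2
      have h0e := Int.emod_nonneg (c e.1) (ne_of_gt hD)
      have h0f := Int.emod_nonneg (c f.1) (ne_of_gt hD)
      have hmod : c e.1 % (G.maxDegree : ℤ) = c f.1 % (G.maxDegree : ℤ) := by
        have := congrArg Fin.val hCeq
        simp only at this
        omega
      have hne' : e.1 ≠ f.1 := fun hh => hne (Subtype.ext hh)
      have hcne : c e.1 ≠ c f.1 := hc.1 e.1 e.2 f.1 f.2 hne' ⟨v, hve, hvf⟩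
      have hdvd : (G.maxDegree : ℤ) ∣ c f.1 - c e.1 := Int.ModEq.dvd hmod
      have hDle : (G.maxDegree : ℤ) ≤ |c f.1 - c e.1| := by
        refine Int.le_of_dvd ?_ ((dvd_abs _ _).2 hdvd)
        exact abs_pos.2 (sub_ne_zero.2 (Ne.symm hcne))
      have hkey : (c e.1 - c f.1).natAbs + 1 ≤ G.degree v := by
        rcases le_total (c f.1) (c e.1) with hle | hle
        · exact interval_key G c hc v e.2 f.2 hve hvf hle
        · have := interval_key G c hc v f.2 e.2 hvf hve hle
          omega
      have hdeg := G.degree_le_maxDegree v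
      rw [abs_sub_comm] at hDle
      rw [Int.abs_eq_natAbs] at hDle
      omega
  · rintro n ⟨C, hC⟩
    apply G.maxDegree_le_of_forall_degree_le
    intro v
    have : G.degree v = Fintype.card ↥(G.incidenceFinset v) := by
      rw [Fintype.card_coe, G.card_incidenceFinset_eq_degree]
    rw [this]
    have hinj : Function.Injective
        (fun e : ↥(G.incidenceFinset v) =>
          C ⟨e.1, ((SimpleGraph.mem_incidenceFinset (G := G) (v := v) _).1 e.2).1⟩) := by
      intro e₁ e₂ heq
      by_contra hne
      have hne' : (⟨e₁.1, ((SimpleGraph.mem_incidenceFinset (G := G) (v := v) _).1 e₁.2).1⟩ : G.edgeSet) ≠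
          ⟨e₂.1, ((SimpleGraph.mem_incidenceFinset (G := G) (v := v) _).1 e₂.2).1⟩ := by
        intro hh
        injection hh with h'
        exact hne (Subtype.ext h')
      exact hC _ _ hne'
        ⟨v, ((SimpleGraph.mem_incidenceFinset (G := G) (v := v) _).1 e₁.2).2, ((SimpleGraph.mem_incidenceFinset (G := G) (v := v) _).1 e₂.2).2⟩ heq
    simpa using Fintype.card_le_of_injective _ hinj
end

section
/- Every finite tree admits an interval edge-coloring. -/
open SimpleGraph Classical in
theorem aux {V : Type*} [Fintype V] : ∀ (n : ℕ) (G : SimpleGraph V), G.IsAcyclic →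
    G.edgeSet.ncard = n → IntervalColorable G := by
  intro n
  induction n with
  | zero =>
    intro G _ hcard
    have he : G.edgeSet = ∅ := (Set.ncard_eq_zero (Set.toFinite _)).mp hcard
    exact ⟨fun _ => 0, fun e he' => by simp [he] at he',
      fun v x y z _ _ hx _ => by simp [he] at hx⟩
  | succ n ih =>
    intro G hac hcard
    -- pick an edge
    have hne : G.edgeSet.Nonempty := by
      rw [← Set.ncard_pos (Set.toFinite _)] at *; omega
    obtain ⟨e0, he0⟩ := hne
    induction e0 using Sym2.inductionOn with
    | hf u v =>
    rw [mem_edgeSet] at he0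
    set G' := G.deleteEdges {s(u,v)} with hG'
    have hE' : G'.edgeSet = G.edgeSet \ {s(u,v)} := edgeSet_deleteEdges _
    have hac' : G'.IsAcyclic := fun _ c hc =>
      hac (c.mapLe (deleteEdges_le _)) (hc.mapLe (deleteEdges_le _))
    have hcard' : G'.edgeSet.ncard = n := by
      rw [hE', Set.ncard_diff_singleton_of_mem (by exact he0), hcard]
      omega
    obtain ⟨c', hp, hi⟩ := ih G' hac' hcard'
    -- u and v are not reachable in G'
    have hnr : ¬ G'.Reachable u v := by
      have := (isAcyclic_iff_forall_adj_isBridge.mp hac) he0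
      rw [isBridge_iff] at this
      exact this
    have hRu : ¬ G'.Reachable v u := fun h => hnr h.symm
    have hRv : G'.Reachable v v := Reachable.refl v
    -- color sets at each vertex
    set F : V → Set ℤ := fun w => c' '' {f | f ∈ G'.edgeSet ∧ w ∈ f} with hF
    have hFfin : ∀ w, (F w).Finite := fun w => (Set.toFinite _).image c'
    set M : V → ℤ := fun w => if h : (F w).Nonempty
      then ((hFfin w).toFinset.max' (by simpa using h)) else 0 with hM
    have hMle : ∀ w, ∀ a ∈ F w, a ≤ M w := by
      intro w a ha
      have hne : (F w).Nonempty := ⟨a, ha⟩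
      rw [hM]; simp only [hne, dif_pos]
      exact Finset.le_max' _ a ((hFfin w).mem_toFinset.mpr ha)
    have hMmem : ∀ w, (F w).Nonempty → M w ∈ F w := by
      intro w hne
      rw [hM]; simp only [hne, dif_pos]
      exact (hFfin w).mem_toFinset.mp (Finset.max'_mem _ _)
    set mu : ℤ := if h : (F u).Nonempty then M u else
      (if h' : (F v).Nonempty then M v else -1) with hmu
    set t : ℤ := mu + 1 with ht
    set k : ℤ := mu - M v with hk
    have hmuu : ∀ a ∈ F u, a ≤ mu := by
      intro a ha
      rw [hmu]; simp only [Set.nonempty_of_mem ha, dif_pos]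
      exact hMle u a ha
    have hmuv : ∀ a ∈ F v, a + k ≤ mu := by
      intro a ha
      have := hMle v a ha
      rw [hk]; omega
    -- the new coloring
    set c : Sym2 V → ℤ := fun f => if f = s(u,v) then t
      else c' f + (if ∀ x ∈ f, G'.Reachable v x then k else 0) with hc
    -- value of c on G' edges
    have hcval : ∀ f ∈ G'.edgeSet, ∀ w ∈ f,
        c f = c' f + (if G'.Reachable v w then k else 0) := by
      intro f hf w hw
      have hfne : f ≠ s(u,v) := by
        rw [hE'] at hf; exact fun h => hf.2 (by simp [h])
      induction f using Sym2.inductionOn with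
      | hf a b =>
        have hab : G'.Adj a b := (SimpleGraph.mem_edgeSet G').mp hf
        have hiff : (∀ x ∈ s(a,b), G'.Reachable v x) ↔ G'.Reachable v w := by
          constructor
          · intro h; exact h w hw
          · intro h x hx
            rcases Sym2.mem_iff.mp hx with rfl | rfl <;>
              rcases Sym2.mem_iff.mp hw with rfl | rfl
            · exact h
            · exact h.trans hab.symm.reachable
            · exact h.trans hab.reachable
            · exact h
        simp only [hc]
        rw [if_neg hfne]
        simp only [hiff]
    -- edge dichotomy
    have hdich : ∀ f ∈ G.edgeSet, f = s(u,v) ∨ f ∈ G'.edgeSet := by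
      intro f hf
      by_cases h : f = s(u,v)
      · exact Or.inl h
      · exact Or.inr (by rw [hE']; exact ⟨hf, h⟩)
    have hsub : G'.edgeSet ⊆ G.edgeSet := by rw [hE']; exact Set.diff_subset
    have hmemF : ∀ f ∈ G'.edgeSet, ∀ w ∈ f, c' f ∈ F w := by
      intro f hf w hw; exact ⟨f, ⟨hf, hw⟩, rfl⟩
    refine ⟨c, ?_, ?_⟩
    · -- properness
      have key : ∀ f ∈ G'.edgeSet, ∀ w ∈ s(u,v), w ∈ f → c f ≠ t := by
        intro f hf w hw hwf
        rw [hcval f hf w hwf]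
        rcases Sym2.mem_iff.mp hw with rfl | rfl
        · rw [if_neg hRu]
          have := hmuu _ (hmemF f hf w hwf)
          omega
        · rw [if_pos hRv]
          have := hmuv _ (hmemF f hf w hwf)
          omega
      intro e1 he1 e2 he2 hne12 ⟨w, hw1, hw2⟩
      rcases hdich e1 he1 with rfl | h1 <;> rcases hdich e2 he2 with rfl | h2
      · exact absurd rfl hne12
      · have hct : c s(u,v) = t := by simp [hc]
        rw [hct]; exact fun h => key e2 h2 w hw1 hw2 h.symm
      · have hct : c s(u,v) = t := by simp [hc]
        rw [hct]; exact key e1 h1 w hw2 hw1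
      · rw [hcval e1 h1 w hw1, hcval e2 h2 w hw2]
        have := hp e1 h1 e2 h2 hne12 ⟨w, hw1, hw2⟩
        omega
    · -- interval property
      intro w x y z hxy hyz hx hz
      rcases eq_or_lt_of_le hxy with rfl | hxy'
      · exact hx
      rcases eq_or_lt_of_le hyz with rfl | hyz'
      · exact hz
      obtain ⟨ex, hex, hwex, hcex⟩ := hx
      obtain ⟨ez, hez, hwez, hcez⟩ := hz
      -- helper: produce an edge with given color from old coloring, shifted
      have mk : ∀ f ∈ G'.edgeSet, c' f = y - (if G'.Reachable v w then k else 0) → w ∈ f →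
          ∃ e ∈ G.edgeSet, w ∈ e ∧ c e = y := by
        intro f hf hcf hwf
        exact ⟨f, hsub hf, hwf, by rw [hcval f hf w hwf, hcf]; ring⟩
      set σ : ℤ := if G'.Reachable v w then k else 0 with hσ
      -- case on whether ez is the new edge
      rcases hdich ez hez with rfl | hez'
      · -- ez = s(u,v), so z = t
        have hzt : z = t := by rw [← hcez]; simp [hc]
        -- ex cannot be the new edge since x < z
        rcases hdich ex hex with rfl | hex'
        · have : x = t := by rw [← hcex]; simp [hc]
          omega
        · -- w = u or w = v
          have hxF : c' ex ∈ F w := hmemF ex hex' w hwex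
          have hcex' : c' ex = x - σ := by
            rw [hcval ex hex' w hwex] at hcex; omega
          rcases Sym2.mem_iff.mp hwez with rfl | rfl
          · -- w = u
            have hσ0 : σ = 0 := by rw [hσ, if_neg hRu]
            have hFune : (F w).Nonempty := ⟨_, hxF⟩
            have hmueq : mu = M w := by rw [hmu]; simp [hFune]
            obtain ⟨f0, ⟨hf0, hwf0⟩, hcf0⟩ := hMmem w hFune
            have hyle : y ≤ M w := by
              have : y < t := by omega
              omega
            obtain ⟨f, hf, hwf, hcf⟩ := hi w (c' ex) y (M w)
              (by omega) hyle ⟨ex, hex', hwex, rfl⟩ ⟨f0, hf0, hwf0, hcf0⟩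
            exact mk f hf (by omega) hwf
          · -- w = v
            have hσk : σ = k := by rw [hσ, if_pos hRv]
            have hFvne : (F w).Nonempty := ⟨_, hxF⟩
            have hmveq : M w + k = mu := by rw [hk]; ring
            obtain ⟨f0, ⟨hf0, hwf0⟩, hcf0⟩ := hMmem w hFvne
            have hyle : y - k ≤ M w := by
              have : y < t := by omega
              omega
            obtain ⟨f, hf, hwf, hcf⟩ := hi w (c' ex) (y - k) (M w)
              (by omega) hyle ⟨ex, hex', hwex, rfl⟩ ⟨f0, hf0, hwf0, hcf0⟩
            exact mk f hf (by omega) hwf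
      · rcases hdich ex hex with rfl | hex'
        · -- ex = s(u,v) : x = t, but z ≤ shifted max < t, contradiction
          have hxt : x = t := by rw [← hcex]; simp [hc]
          have hzF : c' ez ∈ F w := hmemF ez hez' w hwez
          have hcez' : c' ez = z - σ := by
            rw [hcval ez hez' w hwez] at hcez; omega
          exfalso
          rcases Sym2.mem_iff.mp hwex with rfl | rfl
          · have hσ0 : σ = 0 := by rw [hσ, if_neg hRu]
            have := hmuu _ hzF
            omega
          · have hσk : σ = k := by rw [hσ, if_pos hRv]
            have := hmuv _ hzF
            omega
        · -- both old edges: use old interval property with shift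
          have hcex' : c' ex = x - σ := by
            rw [hcval ex hex' w hwex] at hcex; omega
          have hcez' : c' ez = z - σ := by
            rw [hcval ez hez' w hwez] at hcez; omega
          obtain ⟨f, hf, hwf, hcf⟩ := hi w (x - σ) (y - σ) (z - σ)
            (by omega) (by omega) ⟨ex, hex', hwex, hcex'⟩ ⟨ez, hez', hwez, hcez'⟩
          exact mk f hf (by omega) hwf

/-- Every finite tree admits an interval edge-coloring. -/
theorem stmt4 {V : Type*} [Fintype V] (G : SimpleGraph V) (h : G.IsTree) :
    IntervalColorable G :=
  aux _ G h.IsAcyclic rfl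
end

section
/- Let G be a graph and (X, Y) an ε-regular pair in G with density d > 4ε and |X| = |Y| = n, where 0 < ε < 1/2. Then there exist subsets X' ⊆ X and Y' ⊆ Y with |X'| = |Y'| > (1 - ε)n such that (X', Y') is a 3ε-regular pair with density d' satisfying d - ε ≤ d' ≤ d + ε, and every vertex of X' has at least (d' - 3ε)|X'| neighbors in Y' and vice versa. -/
set_option maxHeartbeats 1000000

open Finset

lemma densAux {V : Type*} (G : SimpleGraph V) [DecidableRel G.Adj] (A B : Finset V) :
    (G.edgeDensity A B : ℝ) * (A.card * B.card) = ∑ x ∈ A, ((B.filter (G.Adj x)).card : ℝ) := by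
  classical
  have hcard : (Rel.interedges G.Adj A B).card = ∑ x ∈ A, (B.filter (G.Adj x)).card := by
    rw [Rel.interedges_eq_biUnion, Finset.card_biUnion]
    · simp
    · intro x hx y hy hxy
      simp only [Finset.disjoint_left, Finset.mem_map, Function.Embedding.coeFn_mk]
      rintro a ⟨b, hb, rfl⟩ ⟨c, hc, h⟩
      exact hxy (congrArg Prod.fst h).symm
  rcases Finset.eq_empty_or_nonempty A with hA | hA
  · simp [hA]
  rcases Finset.eq_empty_or_nonempty B with hB | hB
  · simp [hB]
  have hA0 : (0:ℝ) < A.card := by exact_mod_cast card_pos.2 hA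
  have hB0 : (0:ℝ) < B.card := by exact_mod_cast card_pos.2 hB
  rw [SimpleGraph.edgeDensity, Rel.edgeDensity]
  push_cast
  rw [div_mul_cancel₀ _ (by positivity)]
  exact_mod_cast hcard

lemma sumSwap {V : Type*} (G : SimpleGraph V) [DecidableRel G.Adj] (A B : Finset V) :
    ∑ x ∈ A, ((B.filter (G.Adj x)).card : ℝ)
      = ∑ y ∈ B, ((A.filter (fun x => G.Adj x y)).card : ℝ) := by
  classical
  simp_rw [card_filter]
  push_cast
  rw [Finset.sum_comm]

/-- An `ε`-regular pair of density `d > 4ε` contains a large super `3ε`-regular pair. -/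
theorem stmt10 {V : Type*} (G : SimpleGraph V) [DecidableRel G.Adj]
    (ε : ℝ) (hε : 0 < ε) (hε2 : ε < 1/2) (X Y : Finset V) (hXY : Disjoint X Y)
    (n : ℕ) (hn : 0 < n) (hX : X.card = n) (hY : Y.card = n)
    (hreg : EpsRegular G ε X Y) (hd : 4 * ε < dens G X Y) :
    ∃ X' ⊆ X, ∃ Y' ⊆ Y, X'.card = Y'.card ∧ (1 - ε) * n < (X'.card : ℝ) ∧
      EpsRegular G (3 * ε) X' Y' ∧
      dens G X Y - ε ≤ dens G X' Y' ∧ dens G X' Y' ≤ dens G X Y + ε ∧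
      (∀ x ∈ X', (dens G X' Y' - 3 * ε) * X'.card ≤ ((Y'.filter (G.Adj x)).card : ℝ)) ∧
      (∀ y ∈ Y', (dens G X' Y' - 3 * ε) * Y'.card ≤ ((X'.filter (fun x => G.Adj x y)).card : ℝ)) := by
  classical
  obtain ⟨d, hdd⟩ : ∃ x : ℝ, x = _root_.dens G X Y := ⟨_, rfl⟩
  rw [← hdd] at hd ⊢
  have hn0 : (0:ℝ) < n := by exact_mod_cast hn
  have hεn : ε * n ≤ n := by nlinarith
  obtain ⟨Xg, hXg⟩ : ∃ Z, Z = X.filter (fun x => (d - ε) * n ≤ ((Y.filter (G.Adj x)).card : ℝ)) :=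
    ⟨_, rfl⟩
  obtain ⟨Yg, hYg⟩ :
      ∃ Z, Z = Y.filter (fun y => (d - ε) * n ≤ ((X.filter (fun x => G.Adj x y)).card : ℝ)) :=
    ⟨_, rfl⟩
  have hXgX : Xg ⊆ X := hXg ▸ filter_subset _ _
  have hYgY : Yg ⊆ Y := hYg ▸ filter_subset _ _
  have hXgn : Xg.card ≤ n := hX ▸ card_le_card hXgX
  have hYgn : Yg.card ≤ n := hY ▸ card_le_card hYgY
  -- Xg is large
  have hXgbig : (1 - ε) * n < (Xg.card : ℝ) := by
    by_contra h
    push_neg at h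
    set A : Finset V := X \ Xg with hA
    have hAX : A ⊆ X := sdiff_subset
    have hcardA : (A.card : ℝ) = n - Xg.card := by
      rw [hA, card_sdiff_of_subset hXgX, hX]
      exact Nat.cast_sub hXgn
    have hεA : ε * n ≤ (A.card : ℝ) := by rw [hcardA]; linarith
    have hApos : (0:ℝ) < A.card := lt_of_lt_of_le (by positivity) hεA
    have hAne : A.Nonempty := by
      rw [← card_pos]
      exact_mod_cast hApos
    have hregA := hreg A hAX Y subset_rfl (by rw [hX]; exact hεA) (by rw [hY]; exact hεn)
    rw [← hdd] at hregA
    have hlow : d - ε ≤ _root_.dens G A Y := by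
      have h1 := (abs_le.1 hregA).2
      linarith
    have hsum : ∑ x ∈ A, ((Y.filter (G.Adj x)).card : ℝ) < ∑ _x ∈ A, (d - ε) * n := by
      apply Finset.sum_lt_sum_of_nonempty hAne
      intro x hx
      have hxnot : x ∉ Xg := (mem_sdiff.1 hx).2
      have hc : ¬ ((d - ε) * n ≤ ((Y.filter (G.Adj x)).card : ℝ)) := fun hc =>
        hxnot (hXg ▸ mem_filter.2 ⟨hAX hx, hc⟩)
      linarith [not_le.1 hc]
    rw [Finset.sum_const, nsmul_eq_mul] at hsum
    have hprod := densAux G A Y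
    have he : _root_.dens G A Y * ((A.card : ℝ) * n) = ∑ x ∈ A, ((Y.filter (G.Adj x)).card : ℝ) := by
      rw [show _root_.dens G A Y = ((G.edgeDensity A Y : ℚ) : ℝ) from rfl, ← hprod, hY]
    have hlt : _root_.dens G A Y * ((A.card : ℝ) * n) < A.card * ((d - ε) * n) := by
      rw [he]; exact hsum
    have hmul := mul_le_mul_of_nonneg_right hlow (le_of_lt (mul_pos hApos hn0))
    nlinarith
  -- Yg is large
  have hYgbig : (1 - ε) * n < (Yg.card : ℝ) := by
    by_contra h
    push_neg at h
    set B : Finset V := Y \ Yg with hB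
    have hBY : B ⊆ Y := sdiff_subset
    have hcardB : (B.card : ℝ) = n - Yg.card := by
      rw [hB, card_sdiff_of_subset hYgY, hY]
      exact Nat.cast_sub hYgn
    have hεB : ε * n ≤ (B.card : ℝ) := by rw [hcardB]; linarith
    have hBpos : (0:ℝ) < B.card := lt_of_lt_of_le (by positivity) hεB
    have hBne : B.Nonempty := by
      rw [← card_pos]
      exact_mod_cast hBpos
    have hregB := hreg X subset_rfl B hBY (by rw [hX]; exact hεn) (by rw [hY]; exact hεB)
    rw [← hdd] at hregB
    have hlow : d - ε ≤ _root_.dens G X B := by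
      have h1 := (abs_le.1 hregB).2
      linarith
    have hsum : ∑ y ∈ B, ((X.filter (fun x => G.Adj x y)).card : ℝ) < ∑ _y ∈ B, (d - ε) * n := by
      apply Finset.sum_lt_sum_of_nonempty hBne
      intro y hy
      have hynot : y ∉ Yg := (mem_sdiff.1 hy).2
      have hc : ¬ ((d - ε) * n ≤ ((X.filter (fun x => G.Adj x y)).card : ℝ)) := fun hc =>
        hynot (hYg ▸ mem_filter.2 ⟨hBY hy, hc⟩)
      linarith [not_le.1 hc]
    rw [Finset.sum_const, nsmul_eq_mul] at hsum
    have hprod := densAux G X B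
    rw [sumSwap] at hprod
    have he : _root_.dens G X B * ((n : ℝ) * B.card)
        = ∑ y ∈ B, ((X.filter (fun x => G.Adj x y)).card : ℝ) := by
      rw [show _root_.dens G X B = ((G.edgeDensity X B : ℚ) : ℝ) from rfl, ← hprod, hX]
    have hlt : _root_.dens G X B * ((n : ℝ) * B.card) < B.card * ((d - ε) * n) := by
      rw [he]; exact hsum
    have hmul := mul_le_mul_of_nonneg_right hlow (le_of_lt (mul_pos hn0 hBpos))
    nlinarith
  -- pick equal-sized subsets
  obtain ⟨m, hm⟩ : ∃ m, m = min Xg.card Yg.card := ⟨_, rfl⟩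
  have hm1 : m ≤ Xg.card := hm ▸ min_le_left _ _
  have hm2 : m ≤ Yg.card := hm ▸ min_le_right _ _
  obtain ⟨X', hX'Xg, hX'card⟩ := Finset.exists_subset_card_eq hm1
  obtain ⟨Y', hY'Yg, hY'card⟩ := Finset.exists_subset_card_eq hm2
  have hX'X : X' ⊆ X := hX'Xg.trans hXgX
  have hY'Y : Y' ⊆ Y := hY'Yg.trans hYgY
  have hmn : m ≤ n := le_trans hm1 hXgn
  have hmn' : (m:ℝ) ≤ n := by exact_mod_cast hmn
  have hmbig : (1 - ε) * n < (m:ℝ) := by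
    rcases min_cases Xg.card Yg.card with ⟨h1, _⟩ | ⟨h1, _⟩ <;> rw [hm, h1]
    · exact hXgbig
    · exact hYgbig
  have hm0 : (0:ℝ) ≤ m := Nat.cast_nonneg m
  have hεm : ε * n ≤ (m:ℝ) := by
    nlinarith [mul_nonneg (show (0:ℝ) ≤ 1 - 2*ε by linarith) hn0.le]
  have hregm := hreg X' hX'X Y' hY'Y
    (by rw [hX, hX'card]; exact hεm) (by rw [hY, hY'card]; exact hεm)
  obtain ⟨d', hdd'⟩ : ∃ x : ℝ, x = _root_.dens G X' Y' := ⟨_, rfl⟩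
  rw [← hdd, ← hdd'] at hregm
  have hd'lo : d - ε ≤ d' := by have := (abs_le.1 hregm).2; linarith
  have hd'hi : d' ≤ d + ε := by have := (abs_le.1 hregm).1; linarith
  refine ⟨X', hX'X, Y', hY'Y, by rw [hX'card, hY'card], by rw [hX'card]; exact hmbig, ?_,
    by rw [← hdd']; exact hd'lo, by rw [← hdd']; exact hd'hi, ?_, ?_⟩
  · -- 3ε-regularity
    intro A hA B hB hcA hcB
    rw [← hdd']
    rw [hX'card] at hcA
    rw [hY'card] at hcB
    have key : ε * (n:ℝ) ≤ 3 * ε * m := by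
      nlinarith [mul_nonneg (mul_nonneg hε.le hn0.le) (show (0:ℝ) ≤ 2 - 3*ε by linarith),
        mul_le_mul_of_nonneg_left hmbig.le (show (0:ℝ) ≤ 3*ε by linarith)]
    have hAbig : ε * X.card ≤ (A.card : ℝ) := by
      rw [hX]; linarith
    have hBbig : ε * Y.card ≤ (B.card : ℝ) := by
      rw [hY]; linarith
    have h0 := hreg A (hA.trans hX'X) B (hB.trans hY'Y) hAbig hBbig
    rw [← hdd] at h0
    have h1 := abs_le.1 h0
    rw [abs_le]
    constructor <;> linarith [h1.1, h1.2]
  · -- min degree on X'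
    intro x hx
    have hxXg : x ∈ Xg := hX'Xg hx
    rw [hXg] at hxXg
    have hdeg : (d - ε) * n ≤ ((Y.filter (G.Adj x)).card : ℝ) := (mem_filter.1 hxXg).2
    have hsub : Y.filter (G.Adj x) ⊆ Y'.filter (G.Adj x) ∪ (Y \ Y') := by
      intro y hy
      rw [mem_filter] at hy
      by_cases hy' : y ∈ Y'
      · exact mem_union_left _ (mem_filter.2 ⟨hy', hy.2⟩)
      · exact mem_union_right _ (mem_sdiff.2 ⟨hy.1, hy'⟩)
    have hcard : ((Y.filter (G.Adj x)).card : ℝ)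
        ≤ ((Y'.filter (G.Adj x)).card : ℝ) + ((n:ℝ) - m) := by
      have h1 := card_le_card hsub
      have h2 := card_union_le (Y'.filter (G.Adj x)) (Y \ Y')
      have h3 : (Y \ Y').card = n - m := by rw [card_sdiff_of_subset hY'Y, hY, hY'card]
      have := le_trans h1 h2
      rw [h3] at this
      have h5 := (Nat.cast_le (α := ℝ)).2 this
      push_cast at h5
      rw [Nat.cast_sub hmn] at h5
      linarith
    rw [← hdd', hX'card]
    nlinarith [mul_nonneg hm0 (show (0:ℝ) ≤ d - 2*ε - (d' - 3*ε) by linarith),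
      mul_nonneg (show (0:ℝ) ≤ d - 2*ε by linarith) (show (0:ℝ) ≤ (n:ℝ) - m by linarith)]
  · -- min degree on Y'
    intro y hy
    have hyYg : y ∈ Yg := hY'Yg hy
    rw [hYg] at hyYg
    have hdeg : (d - ε) * n ≤ ((X.filter (fun x => G.Adj x y)).card : ℝ) := (mem_filter.1 hyYg).2
    have hsub : X.filter (fun x => G.Adj x y) ⊆ X'.filter (fun x => G.Adj x y) ∪ (X \ X') := by
      intro x hx
      rw [mem_filter] at hx
      by_cases hx' : x ∈ X'
      · exact mem_union_left _ (mem_filter.2 ⟨hx', hx.2⟩)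
      · exact mem_union_right _ (mem_sdiff.2 ⟨hx.1, hx'⟩)
    have hcard : ((X.filter (fun x => G.Adj x y)).card : ℝ)
        ≤ ((X'.filter (fun x => G.Adj x y)).card : ℝ) + ((n:ℝ) - m) := by
      have h1 := card_le_card hsub
      have h2 := card_union_le (X'.filter (fun x => G.Adj x y)) (X \ X')
      have h3 : (X \ X').card = n - m := by rw [card_sdiff_of_subset hX'X, hX, hX'card]
      have := le_trans h1 h2
      rw [h3] at this
      have h5 := (Nat.cast_le (α := ℝ)).2 this
      push_cast at h5
      rw [Nat.cast_sub hmn] at h5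
      linarith
    rw [← hdd', hY'card]
    nlinarith [mul_nonneg hm0 (show (0:ℝ) ≤ d - 2*ε - (d' - 3*ε) by linarith),
      mul_nonneg (show (0:ℝ) ≤ d - 2*ε by linarith) (show (0:ℝ) ≤ (n:ℝ) - m by linarith)]
end

section
/- Let θ(n) denote the maximum interval thickness over all graphs on n vertices. Then θ(n) = o(n), i.e., for every δ > 0 there exists N such that θ(n) ≤ δn for all n ≥ N. -/
set_option linter.unusedSectionVars false
set_option linter.unusedVariables false

namespace IT

open Finset
open scoped Classical

variable {V : Type*} [Fintype V] [LinearOrder V]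

/-- rank of `v` inside a finset `A` (0 if `v ∉ A`). -/
noncomputable def rk (A : Finset V) (v : V) : ℤ :=
  if h : v ∈ A then (((A.orderIsoOfFin rfl).symm ⟨v, h⟩ : Fin A.card) : ℕ) else 0

lemma rk_nonneg (A : Finset V) (v : V) : 0 ≤ rk A v := by
  unfold rk; split <;> positivity

lemma rk_lt {A : Finset V} {v : V} (h : v ∈ A) : rk A v < A.card := by
  unfold rk; rw [dif_pos h]
  exact_mod_cast (((A.orderIsoOfFin rfl).symm ⟨v, h⟩ : Fin A.card)).isLt

lemma rk_inj {A : Finset V} {v w : V} (hv : v ∈ A) (hw : w ∈ A)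
    (h : rk A v = rk A w) : v = w := by
  unfold rk at h; rw [dif_pos hv, dif_pos hw] at h
  have : ((A.orderIsoOfFin rfl).symm ⟨v, hv⟩) = ((A.orderIsoOfFin rfl).symm ⟨w, hw⟩) := by
    apply Fin.ext; exact_mod_cast h
  have := (A.orderIsoOfFin rfl).symm.injective this
  simpa [Subtype.ext_iff] using this

lemma rk_surj {A : Finset V} {m : ℕ} (hm : m < A.card) : ∃ v ∈ A, rk A v = m := by
  refine ⟨(A.orderIsoOfFin rfl ⟨m, hm⟩ : V), (A.orderIsoOfFin rfl ⟨m, hm⟩).2, ?_⟩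
  unfold rk
  rw [dif_pos]
  norm_cast
  rw [show (⟨(A.orderIsoOfFin rfl ⟨m, hm⟩ : V), _⟩ : {x // x ∈ A}) = A.orderIsoOfFin rfl ⟨m, hm⟩ from rfl,
    OrderIso.symm_apply_apply]
  exact (A.orderIsoOfFin rfl ⟨m, hm⟩).2

/-- the edge set of the complete bipartite graph between `S` and `T`. -/
def bset (S T : Finset V) : Set (Sym2 V) := {e | ∃ x ∈ S, ∃ y ∈ T, e = s(x, y)}

lemma bset_def (S T : Finset V) :
    bset S T = {e : Sym2 V | ∃ x ∈ S, ∃ y ∈ T, e = s(x, y)} := rfl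

lemma ic_of_pairwise_disjoint (C : Set (Sym2 V))
    (h : ∀ e ∈ C, ∀ f ∈ C, e ≠ f → ∀ v, v ∈ e → v ∉ f) :
    IntervalColorable (SimpleGraph.fromEdgeSet C) := by
  refine ⟨fun _ => 0, ?_, ?_⟩
  · rintro e he f hf hne ⟨v, hv1, hv2⟩
    rw [SimpleGraph.edgeSet_fromEdgeSet] at he hf
    exact absurd hv2 (h e he.1 f hf.1 hne v hv1)
  · rintro v x y z hxy hyz ⟨e, he, hve, hcx⟩ ⟨e', he', hve', hcz⟩
    have hee : e = e' := by
      by_contra hne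
      rw [SimpleGraph.edgeSet_fromEdgeSet] at he he'
      exact h e he.1 e' he'.1 hne v hve hve'
    refine ⟨e, he, hve, ?_⟩
    subst hee; omega

lemma ic_biclique_union (F : Finset (Finset V × Finset V))
    (hST : ∀ p ∈ F, Disjoint p.1 p.2)
    (hpq : ∀ p ∈ F, ∀ q ∈ F, p ≠ q → Disjoint (p.1 ∪ p.2) (q.1 ∪ q.2)) :
    IntervalColorable (SimpleGraph.fromEdgeSet (⋃ p ∈ F, bset p.1 p.2)) := by
  classical
  set E : Set (Sym2 V) := ⋃ p ∈ F, bset p.1 p.2 with hE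
  have hmem : ∀ e, e ∈ E ↔ ∃ p ∈ F, ∃ x ∈ p.1, ∃ y ∈ p.2, e = s(x, y) := by
    intro e
    simp [hE, bset, Set.mem_iUnion]
  -- uniqueness of representation
  have partseq : ∀ p ∈ F, ∀ q ∈ F, ∀ v : V, v ∈ p.1 ∪ p.2 → v ∈ q.1 ∪ q.2 → p = q := by
    intro p hp q hq v hv1 hv2
    by_contra hne
    exact Finset.disjoint_left.1 (hpq p hp q hq hne) hv1 hv2
  have repu : ∀ p ∈ F, ∀ q ∈ F, ∀ x ∈ p.1, ∀ y ∈ p.2, ∀ x' ∈ q.1, ∀ y' ∈ q.2,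
      s(x, y) = s(x', y') → p = q ∧ x = x' ∧ y = y' := by
    intro p hp q hq x hx y hy x' hx' y' hy' he
    rcases (Sym2.eq_iff).1 he with ⟨h1, h2⟩ | ⟨h1, h2⟩
    · subst h1; subst h2
      exact ⟨partseq p hp q hq x (mem_union_left _ hx) (mem_union_left _ hx'), rfl, rfl⟩
    · exfalso
      have hxq2 : x ∈ q.2 := h1 ▸ hy'
      have hpq' : p = q := partseq p hp q hq x (mem_union_left _ hx) (mem_union_right _ hxq2)
      subst hpq'
      exact Finset.disjoint_left.1 (hST p hp) hx hxq2
  -- the coloring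
  have hsel : ∀ e, e ∈ E → ∃ pxy : (Finset V × Finset V) × V × V,
      pxy.1 ∈ F ∧ pxy.2.1 ∈ pxy.1.1 ∧ pxy.2.2 ∈ pxy.1.2 ∧ e = s(pxy.2.1, pxy.2.2) := by
    intro e he
    obtain ⟨p, hp, x, hx, y, hy, hexy⟩ := (hmem e).1 he
    exact ⟨⟨p, x, y⟩, hp, hx, hy, hexy⟩
  choose pick hp1 hp2 hp3 hp4 using hsel
  set c : Sym2 V → ℤ := fun e =>
    if h : e ∈ E then rk (pick e h).1.1 (pick e h).2.1 + rk (pick e h).1.2 (pick e h).2.2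
    else 0 with hc
  have cspec : ∀ p ∈ F, ∀ x ∈ p.1, ∀ y ∈ p.2, c s(x, y) = rk p.1 x + rk p.2 y := by
    intro p hp x hx y hy
    have he : s(x, y) ∈ E := (hmem _).2 ⟨p, hp, x, hx, y, hy, rfl⟩
    rw [hc]; dsimp only; rw [dif_pos he]
    obtain ⟨hq, hxq, hyq⟩ := repu _ (hp1 _ he) p hp _ (hp2 _ he) _ (hp3 _ he) x hx y hy
      (hp4 _ he).symm
    rw [hq, hxq, hyq]
  -- edge membership
  have hedge : ∀ e, e ∈ (SimpleGraph.fromEdgeSet E).edgeSet ↔ e ∈ E := by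
    intro e
    rw [SimpleGraph.edgeSet_fromEdgeSet]
    constructor
    · exact fun h => h.1
    · intro h
      refine ⟨h, ?_⟩
      obtain ⟨p, hp, x, hx, y, hy, hexy⟩ := (hmem e).1 h
      subst hexy
      simp only [Set.mem_setOf_eq, Sym2.mem_diagSet, Sym2.isDiag_iff_proj_eq]
      intro hxy
      exact Finset.disjoint_left.1 (hST p hp) hx (hxy ▸ hy)
  refine ⟨c, ?_, ?_⟩
  · -- properness
    rintro e he f hf hne ⟨v, hve, hvf⟩
    rw [hedge] at he hf
    obtain ⟨p, hp, x, hx, y, hy, hexy⟩ := (hmem e).1 he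
    obtain ⟨q, hq, x', hx', y', hy', hfxy⟩ := (hmem f).1 hf
    subst hexy; subst hfxy
    rw [cspec p hp x hx y hy, cspec q hq x' hx' y' hy']
    rcases Sym2.mem_iff.1 hve with hv | hv <;> rcases Sym2.mem_iff.1 hvf with hv' | hv'
    · -- v = x, v = x' : same left vertex
      subst hv; subst hv'
      have hqp : q = p := partseq q hq p hp v (mem_union_left _ hx') (mem_union_left _ hx)
      subst hqp
      have hyy : y ≠ y' := by rintro rfl; exact hne rfl
      intro hcc
      exact hyy (rk_inj hy hy' (by omega))
    · -- v = x ∈ p.1, v = y' ∈ q.2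
      exfalso
      subst hv; subst hv'
      have hqp : q = p := partseq q hq p hp v (mem_union_right _ hy') (mem_union_left _ hx)
      subst hqp
      exact Finset.disjoint_left.1 (hST q hq) hx hy'
    · exfalso
      subst hv; subst hv'
      have hqp : q = p := partseq q hq p hp v (mem_union_left _ hx') (mem_union_right _ hy)
      subst hqp
      exact Finset.disjoint_left.1 (hST q hq) hx' hy
    · subst hv; subst hv'
      have hqp : q = p := partseq q hq p hp v (mem_union_right _ hy') (mem_union_right _ hy)
      subst hqp
      have hxx : x ≠ x' := by
        rintro rfl
        exact hne rfl
      intro hcc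
      exact hxx (rk_inj hx hx' (by omega))
  · -- interval condition
    rintro v x y z hxy hyz ⟨e, he, hve, hcx⟩ ⟨e', he', hve', hcz⟩
    have main : ∀ (base : ℤ) (Bs : Finset V),
        (∀ f', f' ∈ (SimpleGraph.fromEdgeSet E).edgeSet → v ∈ f' →
          ∃ w ∈ Bs, c f' = base + rk Bs w) →
        (∀ w ∈ Bs, s(v, w) ∈ (SimpleGraph.fromEdgeSet E).edgeSet ∧ c s(v, w) = base + rk Bs w) →
        ∃ e ∈ (SimpleGraph.fromEdgeSet E).edgeSet, v ∈ e ∧ c e = y := by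
      intro base Bs hall hpres
      obtain ⟨w1, hw1, hcw1⟩ := hall e he hve
      obtain ⟨w2, hw2, hcw2⟩ := hall e' he' hve'
      have h1 : 0 ≤ y - base := by
        have := rk_nonneg Bs w1; omega
      have h2 : y - base < Bs.card := by
        have := rk_lt hw2; omega
      obtain ⟨w, hw, hrkw⟩ := rk_surj (m := (y - base).toNat) (A := Bs) (by omega)
      obtain ⟨hmem', hcol⟩ := hpres w hw
      exact ⟨s(v, w), hmem', Sym2.mem_mk_left _ _, by rw [hcol, hrkw]; omega⟩
    -- figure out the side of v
    rw [hedge] at he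
    obtain ⟨p, hp, a, ha, b, hb, heab⟩ := (hmem e).1 he
    have hvp : v ∈ p.1 ∪ p.2 := by
      subst heab
      rcases Sym2.mem_iff.1 hve with hv | hv
      · subst hv; exact mem_union_left _ ha
      · subst hv; exact mem_union_right _ hb
    rcases Finset.mem_union.1 hvp with hv1 | hv2
    · refine main (rk p.1 v) p.2 ?_ ?_
      · intro f' hf' hvf'
        rw [hedge] at hf'
        obtain ⟨q, hq, a', ha', b', hb', hfab⟩ := (hmem f').1 hf'
        subst hfab
        rcases Sym2.mem_iff.1 hvf' with hv | hv
        · subst hv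
          have hqp : q = p := partseq q hq p hp v (mem_union_left _ ha') (mem_union_left _ hv1)
          subst hqp
          exact ⟨b', hb', by rw [cspec q hq v ha' b' hb']⟩
        · exfalso
          subst hv
          have hqp : q = p := partseq q hq p hp v (mem_union_right _ hb') (mem_union_left _ hv1)
          subst hqp
          exact Finset.disjoint_left.1 (hST q hq) hv1 hb'
      · intro w hw
        refine ⟨(hedge _).2 ((hmem _).2 ⟨p, hp, v, hv1, w, hw, rfl⟩), ?_⟩
        rw [cspec p hp v hv1 w hw]
    · refine main (rk p.2 v) p.1 ?_ ?_
      · intro f' hf' hvf'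
        rw [hedge] at hf'
        obtain ⟨q, hq, a', ha', b', hb', hfab⟩ := (hmem f').1 hf'
        subst hfab
        rcases Sym2.mem_iff.1 hvf' with hv | hv
        · exfalso
          subst hv
          have hqp : q = p := partseq q hq p hp v (mem_union_left _ ha') (mem_union_right _ hv2)
          subst hqp
          exact Finset.disjoint_left.1 (hST q hq) ha' hv2
        · subst hv
          have hqp : q = p := partseq q hq p hp v (mem_union_right _ hb') (mem_union_right _ hv2)
          subst hqp
          exact ⟨a', ha', by rw [cspec q hq a' ha' v hb']; ring⟩
      · intro w hw
        have hsymm : s(v, w) = s(w, v) := Sym2.eq_swap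
        refine ⟨(hedge _).2 ((hmem _).2 ⟨p, hp, w, hw, v, hv2, hsymm⟩), ?_⟩
        rw [hsymm, cspec p hp w hw v hv2]; ring

lemma thickness_mono {G : SimpleGraph V} {k k' : ℕ} (h : IntervalThicknessLE G k)
    (hkk : k ≤ k') : IntervalThicknessLE G k' := by
  obtain ⟨f, hf⟩ := h
  refine ⟨fun e => Fin.castLE hkk (f e), fun i => ?_⟩
  by_cases hik : (i : ℕ) < k
  · have hset : {e | e ∈ G.edgeSet ∧ Fin.castLE hkk (f e) = i} =
        {e | e ∈ G.edgeSet ∧ f e = ⟨i, hik⟩} := by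
      ext e; simp [Fin.ext_iff]
    rw [hset]; exact hf ⟨i, hik⟩
  · have hset : {e | e ∈ G.edgeSet ∧ Fin.castLE hkk (f e) = i} = (∅ : Set (Sym2 V)) := by
      ext e
      simp only [Set.mem_setOf_eq, Set.mem_empty_iff_false, iff_false, not_and, Fin.ext_iff]
      intro _ h
      have := (f e).isLt; simp only [Fin.coe_castLE] at h; omega
    rw [hset]
    exact ic_of_pairwise_disjoint ∅ (by simp)

lemma thickness_add {G : SimpleGraph V} {C : Set (Sym2 V)} {k : ℕ}
    (hC : IntervalColorable (SimpleGraph.fromEdgeSet (G.edgeSet ∩ C)))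
    (h : IntervalThicknessLE (G.deleteEdges C) k) :
    IntervalThicknessLE G (k + 1) := by
  obtain ⟨f, hf⟩ := h
  refine ⟨fun e => if e ∈ C then Fin.last k else (f e).castSucc, fun i => ?_⟩
  refine Fin.lastCases ?_ ?_ i
  · have hset : {e | e ∈ G.edgeSet ∧ (if e ∈ C then Fin.last k else (f e).castSucc) = Fin.last k}
        = G.edgeSet ∩ C := by
      ext e
      simp only [Set.mem_setOf_eq, Set.mem_inter_iff]
      constructor
      · rintro ⟨he, hite⟩
        refine ⟨he, ?_⟩
        by_contra hc
        rw [if_neg hc] at hite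
        exact absurd hite (Fin.castSucc_lt_last (f e)).ne
      · rintro ⟨he, hc⟩; exact ⟨he, if_pos hc⟩
    rw [hset]; exact hC
  · intro j
    have hset : {e | e ∈ G.edgeSet ∧ (if e ∈ C then Fin.last k else (f e).castSucc) = j.castSucc}
        = {e | e ∈ (G.deleteEdges C).edgeSet ∧ f e = j} := by
      ext e
      simp only [Set.mem_setOf_eq, SimpleGraph.edgeSet_deleteEdges, Set.mem_diff]
      constructor
      · rintro ⟨he, hite⟩
        by_cases hc : e ∈ C
        · rw [if_pos hc] at hite
          exact absurd hite.symm (Fin.castSucc_lt_last j).ne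
        · rw [if_neg hc] at hite
          exact ⟨⟨he, hc⟩, Fin.castSucc_injective _ hite⟩
      · rintro ⟨⟨he, hc⟩, hfe⟩
        exact ⟨he, by rw [if_neg hc, hfe]⟩
    rw [hset]; exact hf j

lemma ic_star (G : SimpleGraph V) (a : V) :
    IntervalColorable (SimpleGraph.fromEdgeSet (G.edgeSet ∩ {e | a ∈ e})) := by
  have hset : G.edgeSet ∩ {e | a ∈ e} =
      ⋃ p ∈ ({({a}, G.neighborFinset a)} : Finset (Finset V × Finset V)), bset p.1 p.2 := by
    ext e
    constructor
    · rintro ⟨he, hae⟩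
      obtain ⟨b, rfl⟩ := (Sym2.mem_iff_exists).1 hae
      refine Set.mem_iUnion₂.2 ⟨({a}, G.neighborFinset a), Finset.mem_singleton_self _, ?_⟩
      exact ⟨a, Finset.mem_singleton_self a, b,
        (SimpleGraph.mem_neighborFinset G a b).2 ((SimpleGraph.mem_edgeSet G).1 he), rfl⟩
    · intro he
      obtain ⟨p, hp, hep⟩ := Set.mem_iUnion₂.1 he
      rw [Finset.mem_singleton] at hp
      subst hp
      obtain ⟨x, hx, y, hy, rfl⟩ := hep
      rw [Finset.mem_singleton] at hx
      rw [hx]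
      exact ⟨(SimpleGraph.mem_edgeSet G).2 ((SimpleGraph.mem_neighborFinset G a y).1 hy),
        Sym2.mem_mk_left _ _⟩
  rw [hset]
  apply ic_biclique_union
  · rintro p hp
    simp only [Finset.mem_singleton] at hp
    subst hp
    simp only [Finset.disjoint_singleton_left, SimpleGraph.mem_neighborFinset]
    exact fun h => G.loopless.irrefl a h
  · rintro p hp q hq hne
    simp only [Finset.mem_singleton] at hp hq
    exact absurd (hp.trans hq.symm) hne

lemma starpeel (H : Finset V) : ∀ (G : SimpleGraph V) (k : ℕ),
    IntervalThicknessLE (G.deleteEdges {e | ∃ a ∈ H, a ∈ e}) k →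
    IntervalThicknessLE G (k + H.card) := by
  induction H using Finset.induction with
  | empty =>
    intro G k h
    have : {e : Sym2 V | ∃ a ∈ (∅ : Finset V), a ∈ e} = ∅ := by simp
    rw [this] at h
    simpa using thickness_mono h (by simp)
  | @insert a H ha ih =>
    intro G k h
    rw [Finset.card_insert_of_notMem ha, ← Nat.add_assoc]
    have hsplit : {e : Sym2 V | ∃ x ∈ insert a H, x ∈ e} =
        {e : Sym2 V | a ∈ e} ∪ {e : Sym2 V | ∃ x ∈ H, x ∈ e} := by
      ext e; simp [or_and_right, exists_or]
    refine thickness_add (C := {e | a ∈ e}) (ic_star G a) ?_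
    refine ih (G.deleteEdges {e | a ∈ e}) k ?_
    rw [SimpleGraph.deleteEdges_deleteEdges, ← hsplit]
    exact h

lemma greedy (D : ℕ) (E : Finset (Sym2 V))
    (hdeg : ∀ v : V, (E.filter (fun e => v ∈ e)).card ≤ D) :
    ∃ f : Sym2 V → Fin (2 * D + 1), ∀ e₁ ∈ E, ∀ e₂ ∈ E, e₁ ≠ e₂ → f e₁ = f e₂ →
      ∀ v, v ∈ e₁ → v ∉ e₂ := by
  induction E using Finset.strongInduction with
  | _ E ih =>
    rcases Finset.eq_empty_or_nonempty E with rfl | ⟨e, he⟩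
    · exact ⟨fun _ => ⟨0, by omega⟩, by simp⟩
    obtain ⟨f', hf'⟩ := ih (E.erase e) (Finset.erase_ssubset he)
      (fun v => le_trans (Finset.card_le_card
        (Finset.filter_subset_filter _ (Finset.erase_subset _ _))) (hdeg v))
    set bad : Finset (Fin (2 * D + 1)) :=
      ((E.erase e).filter (fun e' => ∃ v, v ∈ e' ∧ v ∈ e)).image f' with hbad
    obtain ⟨⟨v₁, v₂⟩, hrep⟩ := Quot.exists_rep e
    have hrep' : e = s(v₁, v₂) := hrep.symm
    have he1 : e ∈ E.filter (fun e' => v₁ ∈ e') :=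
      Finset.mem_filter.2 ⟨he, by rw [hrep']; exact Sym2.mem_mk_left _ _⟩
    have he2 : e ∈ E.filter (fun e' => v₂ ∈ e') :=
      Finset.mem_filter.2 ⟨he, by rw [hrep']; exact Sym2.mem_mk_right _ _⟩
    have hbadcard : bad.card < 2 * D + 1 := by
      have hsub : (E.erase e).filter (fun e' => ∃ v, v ∈ e' ∧ v ∈ e) ⊆
          ((E.filter (fun e' => v₁ ∈ e')).erase e) ∪ ((E.filter (fun e' => v₂ ∈ e')).erase e) := by
        intro e' he'
        obtain ⟨hm, v, hv1, hv2⟩ := Finset.mem_filter.1 he'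
        obtain ⟨hne', hmE⟩ := Finset.mem_erase.1 hm
        rw [hrep'] at hv2
        rcases Sym2.mem_iff.1 hv2 with rfl | rfl
        · exact Finset.mem_union_left _ (Finset.mem_erase.2 ⟨hne', Finset.mem_filter.2 ⟨hmE, hv1⟩⟩)
        · exact Finset.mem_union_right _ (Finset.mem_erase.2 ⟨hne', Finset.mem_filter.2 ⟨hmE, hv1⟩⟩)
      have hc1 : ((E.filter (fun e' => v₁ ∈ e')).erase e).card + 1 ≤ D := by
        rw [Finset.card_erase_of_mem he1]
        have hp := Finset.card_pos.2 ⟨e, he1⟩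
        have := hdeg v₁
        omega
      have hc2 : ((E.filter (fun e' => v₂ ∈ e')).erase e).card + 1 ≤ D := by
        rw [Finset.card_erase_of_mem he2]
        have hp := Finset.card_pos.2 ⟨e, he2⟩
        have := hdeg v₂
        omega
      calc bad.card ≤ ((E.erase e).filter (fun e' => ∃ v, v ∈ e' ∧ v ∈ e)).card :=
            Finset.card_image_le
        _ ≤ _ := Finset.card_le_card hsub
        _ ≤ ((E.filter (fun e' => v₁ ∈ e')).erase e).card
            + ((E.filter (fun e' => v₂ ∈ e')).erase e).card := Finset.card_union_le _ _
        _ < 2 * D + 1 := by omega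
    have hex : ∃ i : Fin (2 * D + 1), i ∉ bad := by
      by_contra hcon
      push_neg at hcon
      have hsub : (Finset.univ : Finset (Fin (2 * D + 1))) ⊆ bad := fun i _ => hcon i
      have := Finset.card_le_card hsub
      simp only [Finset.card_univ, Fintype.card_fin] at this
      omega
    obtain ⟨i, hi⟩ := hex
    refine ⟨Function.update f' e i, ?_⟩
    intro e₁ h₁ e₂ h₂ hne hfeq v hv1 hv2
    by_cases he1 : e₁ = e <;> by_cases he2 : e₂ = e
    · exact hne (he1.trans he2.symm)
    · subst he1
      rw [Function.update_self, Function.update_of_ne he2] at hfeq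
      apply hi
      rw [hfeq, hbad]
      exact Finset.mem_image_of_mem f' (Finset.mem_filter.2
        ⟨Finset.mem_erase.2 ⟨he2, h₂⟩, v, hv2, hv1⟩)
    · subst he2
      rw [Function.update_self, Function.update_of_ne he1] at hfeq
      apply hi
      rw [← hfeq, hbad]
      exact Finset.mem_image_of_mem f' (Finset.mem_filter.2
        ⟨Finset.mem_erase.2 ⟨he1, h₁⟩, v, hv1, hv2⟩)
    · rw [Function.update_of_ne he1, Function.update_of_ne he2] at hfeq
      exact hf' e₁ (Finset.mem_erase.2 ⟨he1, h₁⟩) e₂ (Finset.mem_erase.2 ⟨he2, h₂⟩)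
        hne hfeq v hv1 hv2

lemma ktt (G : SimpleGraph V) (U : Finset V) (t a h : ℕ)
    (hH : h ≤ (U.filter (fun v => a ≤ (U.filter (fun u => G.Adj v u)).card)).card)
    (hnum : (2 * t) * (Nat.choose (Fintype.card V) t) < h * Nat.choose a t) :
    ∃ S T : Finset V, S ⊆ U ∧ T ⊆ U ∧ S.card = t ∧ T.card = t ∧ Disjoint S T ∧
      ∀ x ∈ S, ∀ y ∈ T, G.Adj x y := by
  set cn : V → Finset V := fun v => U.filter (fun u => G.Adj v u) with hcn
  have key : ∃ S ∈ U.powersetCard t, 2 * t ≤ (U.filter (fun v => ∀ u ∈ S, G.Adj v u)).card := by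
    by_contra hcon
    push_neg at hcon
    set P : Finset (V × Finset V) :=
      (U ×ˢ U.powersetCard t).filter (fun vS => ∀ u ∈ vS.2, G.Adj vS.1 u) with hP
    -- lower bound on P.card
    have hfib1 : ∀ v ∈ U, P.filter (fun x => x.1 = v) = {v} ×ˢ ((cn v).powersetCard t) := by
      intro v hv
      ext ⟨w, S⟩
      simp only [hP, Finset.mem_filter, Finset.mem_product, Finset.mem_singleton,
        Finset.mem_powersetCard]
      constructor
      · rintro ⟨⟨⟨hw, hS, hcard⟩, hadj⟩, rfl⟩
        exact ⟨rfl, fun u hu => Finset.mem_filter.2 ⟨hS hu, hadj u hu⟩, hcard⟩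
      · rintro ⟨rfl, hsub, hcard⟩
        refine ⟨⟨⟨hv, fun u hu => (Finset.mem_filter.1 (hsub hu)).1, hcard⟩, ?_⟩, rfl⟩
        exact fun u hu => (Finset.mem_filter.1 (hsub hu)).2
    have hlow : ∑ v ∈ U, Nat.choose ((cn v).card) t ≤ P.card := by
      have hPsub : ∀ x ∈ P, x.1 ∈ U := by
        rintro ⟨w, S⟩ hx
        exact (Finset.mem_product.1 (Finset.mem_filter.1 hx).1).1
      rw [Finset.card_eq_sum_card_fiberwise hPsub]
      apply le_of_eq
      apply Finset.sum_congr rfl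
      intro v hv
      rw [hfib1 v hv, Finset.singleton_product, Finset.card_map, Finset.card_powersetCard]
    -- upper bound on P.card
    have hfib2 : ∀ S ∈ U.powersetCard t,
        P.filter (fun x => x.2 = S) = (U.filter (fun v => ∀ u ∈ S, G.Adj v u)) ×ˢ {S} := by
      intro S hS
      ext ⟨w, S'⟩
      simp only [hP, Finset.mem_filter, Finset.mem_product, Finset.mem_singleton]
      constructor
      · rintro ⟨⟨⟨hw, _⟩, hadj⟩, rfl⟩
        exact ⟨⟨hw, hadj⟩, rfl⟩
      · rintro ⟨⟨hw, hadj⟩, rfl⟩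
        exact ⟨⟨⟨hw, hS⟩, hadj⟩, rfl⟩
    have hup : P.card ≤ (2 * t - 1) * Nat.choose U.card t := by
      have hPsub : ∀ x ∈ P, x.2 ∈ U.powersetCard t := by
        rintro ⟨w, S⟩ hx
        exact (Finset.mem_product.1 (Finset.mem_filter.1 hx).1).2
      rw [Finset.card_eq_sum_card_fiberwise hPsub]
      calc ∑ S ∈ U.powersetCard t, (P.filter (fun x => x.2 = S)).card
          ≤ ∑ S ∈ U.powersetCard t, (2 * t - 1) := by
            apply Finset.sum_le_sum
            intro S hS
            rw [hfib2 S hS, Finset.card_product, Finset.card_singleton, Nat.mul_one]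
            have := hcon S hS
            omega
        _ = (U.powersetCard t).card * (2 * t - 1) := by rw [Finset.sum_const, smul_eq_mul]
        _ = (2 * t - 1) * Nat.choose U.card t := by
            rw [Finset.card_powersetCard, Nat.mul_comm]
    -- combine with the high-degree vertices
    have hHlow : h * Nat.choose a t ≤ ∑ v ∈ U, Nat.choose ((cn v).card) t := by
      have hsub : U.filter (fun v => a ≤ (cn v).card) ⊆ U := Finset.filter_subset _ _
      calc h * Nat.choose a t
          ≤ (U.filter (fun v => a ≤ (cn v).card)).card * Nat.choose a t := by
            apply Nat.mul_le_mul_right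
            exact hH
        _ ≤ ∑ v ∈ U.filter (fun v => a ≤ (cn v).card), Nat.choose ((cn v).card) t := by
            rw [← smul_eq_mul]
            apply Finset.card_nsmul_le_sum
            intro v hv
            exact Nat.choose_le_choose t (Finset.mem_filter.1 hv).2
        _ ≤ _ := Finset.sum_le_sum_of_subset hsub
    have hUn : Nat.choose U.card t ≤ Nat.choose (Fintype.card V) t :=
      Nat.choose_le_choose t (Finset.card_le_card (Finset.subset_univ U))
    have : h * Nat.choose a t ≤ (2 * t - 1) * Nat.choose (Fintype.card V) t :=
      le_trans (le_trans hHlow hlow) (le_trans hup (Nat.mul_le_mul_left _ hUn))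
    have h2 : (2 * t - 1) * Nat.choose (Fintype.card V) t ≤ 2 * t * Nat.choose (Fintype.card V) t :=
      Nat.mul_le_mul_right _ (by omega)
    omega
  obtain ⟨S, hS, hcommon⟩ := key
  obtain ⟨hSU, hScard⟩ := Finset.mem_powersetCard.1 hS
  set W := U.filter (fun v => ∀ u ∈ S, G.Adj v u) with hW
  have hWS : t ≤ (W \ S).card := by
    have := Finset.le_card_sdiff S W
    omega
  obtain ⟨T, hTsub, hTcard⟩ := Finset.exists_subset_card_eq hWS
  refine ⟨S, T, hSU, ?_, hScard, hTcard, ?_, ?_⟩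
  · intro y hy
    exact (Finset.mem_filter.1 (Finset.mem_sdiff.1 (hTsub hy)).1).1
  · exact (Finset.disjoint_of_subset_left hTsub (Finset.sdiff_disjoint)).symm
  · intro x hx y hy
    have hyW : y ∈ W := (Finset.mem_sdiff.1 (hTsub hy)).1
    exact ((Finset.mem_filter.1 hyW).2 x hx).symm

/-- the edge finset of the complete bipartite graph between `S` and `T`. -/
def bclF (S T : Finset V) : Finset (Sym2 V) := (S ×ˢ T).image (fun xy => s(xy.1, xy.2))

/-- threshold for `n` in the extraction lemma. -/
def Nb (s : ℕ) : ℕ := 2 * s ^ 2 * (2 * s ^ 4 * (8 * s ^ 2) ^ (s ^ 4) + 1) + 2000 * s ^ 12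

set_option maxHeartbeats 1000000 in
lemma extract (s : ℕ) (hs : 2 ≤ s) (G : SimpleGraph V)
    (hn : Nb s ≤ Fintype.card V)
    (hdense : (Fintype.card V) ^ 2 / s ^ 2 ≤ G.edgeFinset.card) :
    ∃ C : Finset (Sym2 V), ↑C ⊆ G.edgeSet ∧
      IntervalColorable (SimpleGraph.fromEdgeSet (C : Set (Sym2 V))) ∧
      (Fintype.card V) * s ^ 2 / 8 ≤ C.card := by
  set n := Fintype.card V with hnn
  set t := s ^ 4 with ht
  clear_value n t
  -- maximal family of disjoint bicliques
  set valid : Finset (Finset V × Finset V) → Prop := fun F =>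
    (∀ p ∈ F, p.1.card = t ∧ p.2.card = t ∧ Disjoint p.1 p.2 ∧
      ∀ x ∈ p.1, ∀ y ∈ p.2, G.Adj x y) ∧
    (∀ p ∈ F, ∀ q ∈ F, p ≠ q → Disjoint (p.1 ∪ p.2) (q.1 ∪ q.2)) with hvalid
  have hvne : (Finset.univ.filter (fun F => valid F)).Nonempty :=
    ⟨∅, Finset.mem_filter.2 ⟨Finset.mem_univ _, by simp [hvalid]⟩⟩
  obtain ⟨F, hFmem, hFmax⟩ := Finset.exists_max_image _ (fun F => F.card) hvne
  have hFvalid : valid F := (Finset.mem_filter.1 hFmem).2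
  set W : Finset V := F.biUnion (fun p => p.1 ∪ p.2) with hW
  set U : Finset V := Finset.univ \ W with hU
  -- maximality: no K_{t,t} inside U
  have hnoU : ¬ ∃ S T : Finset V, S ⊆ U ∧ T ⊆ U ∧ S.card = t ∧ T.card = t ∧ Disjoint S T ∧
      ∀ x ∈ S, ∀ y ∈ T, G.Adj x y := by
    rintro ⟨S, T, hSU, hTU, hSc, hTc, hdisj, hadj⟩
    have hSW : ∀ x ∈ S, x ∉ W := fun x hx => (Finset.mem_sdiff.1 (hSU hx)).2
    have hTW : ∀ x ∈ T, x ∉ W := fun x hx => (Finset.mem_sdiff.1 (hTU hx)).2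
    have hnotin : (S, T) ∉ F := by
      intro hin
      have hS0 : S.Nonempty := by
        rw [← Finset.card_pos, hSc, ht]; positivity
      obtain ⟨x, hx⟩ := hS0
      exact hSW x hx (Finset.mem_biUnion.2 ⟨(S, T), hin, Finset.mem_union_left _ hx⟩)
    have hvalid' : valid (insert (S, T) F) := by
      constructor
      · intro p hp
        rcases Finset.mem_insert.1 hp with rfl | hp
        · exact ⟨hSc, hTc, hdisj, hadj⟩
        · exact hFvalid.1 p hp
      · intro p hp q hq hpq
        rcases Finset.mem_insert.1 hp with rfl | hp <;> rcases Finset.mem_insert.1 hq with rfl | hq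
        · exact absurd rfl hpq
        · rw [Finset.disjoint_left]
          intro x hx hxq
          have hxW : x ∈ W := Finset.mem_biUnion.2 ⟨q, hq, hxq⟩
          rcases Finset.mem_union.1 hx with h | h
          · exact hSW x h hxW
          · exact hTW x h hxW
        · rw [Finset.disjoint_right]
          intro x hx hxq
          have hxW : x ∈ W := Finset.mem_biUnion.2 ⟨p, hp, hxq⟩
          rcases Finset.mem_union.1 hx with h | h
          · exact hSW x h hxW
          · exact hTW x h hxW
        · exact hFvalid.2 p hp q hq hpq
    have hle := hFmax _ (Finset.mem_filter.2 ⟨Finset.mem_univ _, hvalid'⟩)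
    rw [Finset.card_insert_of_notMem hnotin] at hle
    omega
  -- numeric setup
  set m := n / (8 * s ^ 2) with hm
  set a := m + 2 * t with ha
  set h₀ := n / (2 * s ^ 2) with hh₀
  clear_value m a h₀
  have hspos : 0 < s := by omega
  have hnpos : 0 < n := by
    have : 0 < Nb s := by unfold Nb; positivity
    omega
  have hlt : n < 8 * s ^ 2 * (m + 1) := by
    have hdm := Nat.div_add_mod n (8 * s ^ 2)
    have hmod := Nat.mod_lt n (show 0 < 8 * s ^ 2 by positivity)
    rw [← hm] at hdm
    nlinarith [hdm, hmod]
  have hm_low : 250 * s ^ 10 ≤ m := by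
    have h1 : (250 * s ^ 10) * (8 * s ^ 2) ≤ Nb s := by
      calc (250 * s ^ 10) * (8 * s ^ 2) = 2000 * s ^ 12 := by ring
        _ ≤ Nb s := by unfold Nb; exact Nat.le_add_left _ _
    rw [hm]
    exact (Nat.le_div_iff_mul_le (by positivity)).2 (le_trans h1 hn)
  have hmt : 32 * t + 8 ≤ m := by
    have h64 : 64 ≤ s ^ 6 := by
      calc (64 : ℕ) = 2 ^ 6 := by norm_num
        _ ≤ s ^ 6 := Nat.pow_le_pow_left hs 6
    have h1 : 32 * s ^ 4 + 8 ≤ 250 * s ^ 10 := by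
      have hp : s ^ 4 * 64 ≤ s ^ 4 * s ^ 6 := mul_le_mul_right h64 _
      have hq : s ^ 10 = s ^ 4 * s ^ 6 := by ring
      have hs4 : 1 ≤ s ^ 4 := Nat.one_le_pow _ _ (by omega)
      nlinarith [hp, hq, hs4]
    rw [ht]
    omega
  have hnum : (2 * t) * (Nat.choose n t) < h₀ * Nat.choose a t := by
    have htpos : 0 < t := by rw [ht]; positivity
    have hDF : 2 * t * Nat.descFactorial n t < h₀ * Nat.descFactorial a t := by
      have h1 : Nat.descFactorial n t ≤ n ^ t := Nat.descFactorial_le_pow n t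
      have h2 : (m + 1) ^ t ≤ Nat.descFactorial a t := by
        refine le_trans ?_ (Nat.pow_sub_le_descFactorial a t)
        apply Nat.pow_le_pow_left
        omega
      have h3 : n ^ t < (8 * s ^ 2) ^ t * (m + 1) ^ t := by
        rw [← Nat.mul_pow]
        exact Nat.pow_lt_pow_left hlt (by omega)
      have hkey : 2 * t * (8 * s ^ 2) ^ t + 1 ≤ h₀ := by
        have hX : (2 * s ^ 4 * (8 * s ^ 2) ^ (s ^ 4) + 1) * (2 * s ^ 2) ≤ Nb s := by
          calc (2 * s ^ 4 * (8 * s ^ 2) ^ (s ^ 4) + 1) * (2 * s ^ 2)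
              = 2 * s ^ 2 * (2 * s ^ 4 * (8 * s ^ 2) ^ (s ^ 4) + 1) := by ring
            _ ≤ Nb s := by unfold Nb; exact Nat.le_add_right _ _
        have h5 : 2 * s ^ 4 * (8 * s ^ 2) ^ (s ^ 4) + 1 ≤ n / (2 * s ^ 2) :=
          (Nat.le_div_iff_mul_le (by positivity)).2 (le_trans hX hn)
        rw [hh₀, ht]
        omega
      have hmppos : 0 < (m + 1) ^ t := by positivity
      calc 2 * t * Nat.descFactorial n t ≤ 2 * t * n ^ t := mul_le_mul_right h1 _
        _ < 2 * t * ((8 * s ^ 2) ^ t * (m + 1) ^ t) := by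
            exact mul_lt_mul_of_pos_left h3 (by omega)
        _ = (2 * t * (8 * s ^ 2) ^ t) * (m + 1) ^ t := by ring
        _ < h₀ * (m + 1) ^ t := by
            apply mul_lt_mul_of_pos_right _ hmppos
            omega
        _ ≤ h₀ * Nat.descFactorial a t := mul_le_mul_right h2 _
    rw [Nat.descFactorial_eq_factorial_mul_choose, Nat.descFactorial_eq_factorial_mul_choose]
      at hDF
    have hfac : 0 < Nat.factorial t := Nat.factorial_pos t
    apply Nat.lt_of_mul_lt_mul_left (a := Nat.factorial t)
    calc Nat.factorial t * (2 * t * Nat.choose n t)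
        = 2 * t * (Nat.factorial t * Nat.choose n t) := by ring
      _ < h₀ * (Nat.factorial t * Nat.choose a t) := hDF
      _ = Nat.factorial t * (h₀ * Nat.choose a t) := by ring
  have hsmall : (U.filter (fun v => a ≤ (U.filter (fun u => G.Adj v u)).card)).card < h₀ := by
    by_contra hge
    push_neg at hge
    obtain ⟨S, T, h1, h2, h3, h4, h5, h6⟩ := ktt G U t a h₀ hge (by rw [← hnn]; exact hnum)
    exact hnoU ⟨S, T, h1, h2, h3, h4, h5, h6⟩
  -- counting: W must be large
  set dU : V → ℕ := fun v => (U.filter (fun u => G.Adj v u)).card with hdU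
  set dW : V → ℕ := fun v => (W.filter (fun u => G.Adj v u)).card with hdW
  have hWbig : 2 * (m + 1) ≤ W.card := by
    by_contra hcon
    push_neg at hcon
    have hww : W.card ≤ 2 * m + 1 := by omega
    have hdegle : ∀ v : V, G.degree v ≤ n := by
      intro v
      have := G.degree_lt_card_verts v
      omega
    have hdeg_split : ∀ v : V, G.degree v = dU v + dW v := by
      intro v
      have huniv : (univ : Finset V) = U ∪ W := by
        rw [hU]
        exact (Finset.sdiff_union_of_subset (Finset.subset_univ W)).symm
      have hdisj : Disjoint U W := by rw [hU]; exact Finset.sdiff_disjoint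
      rw [hdU, hdW]
      dsimp only
      rw [← SimpleGraph.card_neighborFinset_eq_degree, SimpleGraph.neighborFinset_eq_filter,
        huniv, Finset.filter_union,
        Finset.card_union_of_disjoint (Finset.disjoint_filter_filter hdisj)]
    have hsum2 : ∑ v ∈ W, G.degree v + ∑ v ∈ U, G.degree v = 2 * G.edgeFinset.card := by
      rw [← SimpleGraph.sum_degrees_eq_twice_card_edges G, hU, add_comm]
      exact Finset.sum_sdiff (Finset.subset_univ W)
    have hWdeg : ∑ w ∈ W, G.degree w ≤ W.card * n := by
      have h := Finset.sum_le_card_nsmul W _ n (fun w _ => hdegle w)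
      rwa [smul_eq_mul] at h
    have hUcard : U.card ≤ n := by
      have h1 := Finset.card_le_univ U
      omega
    have hUdU : ∑ v ∈ U, dU v ≤ h₀ * n + n * a := by
      rw [← Finset.sum_filter_add_sum_filter_not U (fun v => a ≤ dU v) dU]
      have hb1 : ∑ v ∈ U.filter (fun v => a ≤ dU v), dU v ≤ h₀ * n := by
        have hc : (U.filter (fun v => a ≤ dU v)).card ≤ h₀ := le_of_lt hsmall
        have hble : ∀ v ∈ U.filter (fun v => a ≤ dU v), dU v ≤ n := by
          intro v _
          have h2 : dU v ≤ U.card := Finset.card_filter_le _ _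
          omega
        have h := Finset.sum_le_card_nsmul _ _ n hble
        rw [smul_eq_mul] at h
        exact le_trans h (Nat.mul_le_mul_right n hc)
      have hb2 : ∑ v ∈ U.filter (fun v => ¬ a ≤ dU v), dU v ≤ n * a := by
        have hble : ∀ v ∈ U.filter (fun v => ¬ a ≤ dU v), dU v ≤ a := by
          intro v hv
          have := (Finset.mem_filter.1 hv).2
          omega
        have h := Finset.sum_le_card_nsmul _ _ a hble
        rw [smul_eq_mul] at h
        exact le_trans h
          (Nat.mul_le_mul_right a (le_trans (Finset.card_filter_le _ _) hUcard))
      exact add_le_add hb1 hb2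
    have hflip : ∑ v ∈ U, dW v ≤ ∑ w ∈ W, G.degree w := by
      have h1 : ∑ v ∈ U, dW v = ∑ w ∈ W, (U.filter (fun u => G.Adj w u)).card := by
        have e1 : ∀ v ∈ U, dW v = ∑ w ∈ W, (if G.Adj v w then 1 else 0) := by
          intro v _
          rw [hdW]
          dsimp only
          exact Finset.card_filter _ _
        rw [Finset.sum_congr rfl e1, Finset.sum_comm]
        apply Finset.sum_congr rfl
        intro w _
        rw [Finset.card_filter]
        apply Finset.sum_congr rfl
        intro v _
        rw [G.adj_comm]
      rw [h1]
      apply Finset.sum_le_sum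
      intro w _
      calc (U.filter (fun u => G.Adj w u)).card
          ≤ (univ.filter (fun u => G.Adj w u)).card :=
            Finset.card_le_card (Finset.filter_subset_filter _ (Finset.subset_univ U))
        _ = G.degree w := by
            rw [← SimpleGraph.neighborFinset_eq_filter, SimpleGraph.card_neighborFinset_eq_degree]
    have hUdeg : ∑ v ∈ U, G.degree v = ∑ v ∈ U, dU v + ∑ v ∈ U, dW v := by
      rw [← Finset.sum_add_distrib]
      exact Finset.sum_congr rfl (fun v _ => hdeg_split v)
    have hdiv : 64 * s ^ 2 * m ^ 2 ≤ n ^ 2 / s ^ 2 := by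
      have h1 : 8 * s ^ 2 * m ≤ n := by
        rw [hm]
        calc 8 * s ^ 2 * (n / (8 * s ^ 2)) = (n / (8 * s ^ 2)) * (8 * s ^ 2) := by ring
          _ ≤ n := Nat.div_mul_le_self _ _
      apply (Nat.le_div_iff_mul_le (show 0 < s ^ 2 by positivity)).2
      calc 64 * s ^ 2 * m ^ 2 * s ^ 2 = (8 * s ^ 2 * m) ^ 2 := by ring
        _ ≤ n ^ 2 := Nat.pow_le_pow_left h1 2
    have hh0le : h₀ ≤ 4 * m + 3 := by
      have h2 : h₀ < 4 * (m + 1) := by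
        rw [hh₀]
        apply Nat.div_lt_of_lt_mul
        calc n < 8 * s ^ 2 * (m + 1) := hlt
          _ = 2 * s ^ 2 * (4 * (m + 1)) := by ring
      omega
    have hchain : 128 * s ^ 2 * m ^ 2 ≤ 2 * (W.card * n) + (h₀ * n + n * a) := by
      linarith [hsum2, hWdeg, hUdeg, hUdU, hflip, hdiv, hdense]
    have hWn : W.card * n ≤ (2 * m + 1) * n := Nat.mul_le_mul_right n hww
    have hh0n : h₀ * n ≤ (4 * m + 3) * n := Nat.mul_le_mul_right n hh0le
    have hnle : n ≤ 8 * s ^ 2 * (m + 1) := le_of_lt hlt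
    have hbound : 128 * s ^ 2 * m ^ 2 ≤ 10 * m * (8 * s ^ 2 * (m + 1)) := by
      have h9 : (2 * (2 * m + 1) + (4 * m + 3) + (m + 2 * t)) ≤ 10 * m := by omega
      calc 128 * s ^ 2 * m ^ 2 ≤ 2 * (W.card * n) + (h₀ * n + n * a) := hchain
        _ ≤ (2 * (2 * m + 1) + (4 * m + 3) + (m + 2 * t)) * n := by
            have hna : n * a = (m + 2 * t) * n := by rw [ha]; ring
            linarith [hWn, hh0n]
        _ ≤ (10 * m) * n := Nat.mul_le_mul_right n h9
        _ ≤ 10 * m * (8 * s ^ 2 * (m + 1)) := Nat.mul_le_mul_left _ hnle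
    have hs2 : 0 < s ^ 2 := by positivity
    have hm2 : 2 ≤ m := by
      have h10 : 1 ≤ s ^ 10 := Nat.one_le_pow _ _ (by omega)
      omega
    nlinarith [hbound, hm2, hs2, mul_pos hs2 (show 0 < m by omega)]
  -- the family is large
  have hFW : W.card = F.card * (2 * t) := by
    rw [hW]
    rw [Finset.card_biUnion]
    · rw [Finset.sum_congr rfl (fun p hp => ?_), Finset.sum_const, smul_eq_mul]
      obtain ⟨h1, h2, h3, _⟩ := hFvalid.1 p hp
      rw [Finset.card_union_of_disjoint h3, h1, h2]; omega
    · intro p hp q hq hpq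
      exact hFvalid.2 p hp q hq hpq
  -- build C
  set C : Finset (Sym2 V) := F.biUnion (fun p => bclF p.1 p.2) with hC
  have hbmem : ∀ (p : Finset V × Finset V) (e : Sym2 V),
      e ∈ bclF p.1 p.2 ↔ ∃ x ∈ p.1, ∃ y ∈ p.2, e = s(x, y) := by
    intro p e
    simp only [bclF, Finset.mem_image, Finset.mem_product, Prod.exists]
    constructor
    · rintro ⟨x, y, ⟨hx, hy⟩, rfl⟩
      exact ⟨x, hx, y, hy, rfl⟩
    · rintro ⟨x, hx, y, hy, rfl⟩
      exact ⟨x, y, ⟨hx, hy⟩, rfl⟩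
  have hCsub : ↑C ⊆ G.edgeSet := by
    intro e he
    rw [Finset.mem_coe, hC, Finset.mem_biUnion] at he
    obtain ⟨p, hp, hep⟩ := he
    obtain ⟨x, hx, y, hy, rfl⟩ := (hbmem p e).1 hep
    exact (SimpleGraph.mem_edgeSet G).2 ((hFvalid.1 p hp).2.2.2 x hx y hy)
  have hCcard : C.card = F.card * (t * t) := by
    rw [hC, Finset.card_biUnion]
    · rw [Finset.sum_congr rfl (fun p hp => ?_), Finset.sum_const, smul_eq_mul]
      obtain ⟨h1, h2, h3, _⟩ := hFvalid.1 p hp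
      rw [bclF, Finset.card_image_of_injOn, Finset.card_product, h1, h2]
      rintro ⟨x, y⟩ hxy ⟨x', y'⟩ hxy' heq
      simp only [Finset.mem_coe, Finset.mem_product] at hxy hxy'
      dsimp only at heq hxy hxy' ⊢
      rcases Sym2.eq_iff.1 heq with ⟨rfl, rfl⟩ | ⟨h5, h6⟩
      · rfl
      · exfalso
        subst h5
        exact Finset.disjoint_left.1 h3 hxy.1 hxy'.2
    · intro p hp q hq hpq
      rw [Function.onFun, Finset.disjoint_left]
      intro e hep heq
      obtain ⟨x, hx, y, hy, rfl⟩ := (hbmem p e).1 hep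
      obtain ⟨x', hx', y', hy', heq'⟩ := (hbmem q _).1 heq
      have hxq : x ∈ q.1 ∪ q.2 := by
        rcases Sym2.eq_iff.1 heq' with ⟨rfl, rfl⟩ | ⟨rfl, rfl⟩
        · exact Finset.mem_union_left _ hx'
        · exact Finset.mem_union_right _ hy'
      exact Finset.disjoint_left.1 (hFvalid.2 p hp q hq hpq) (Finset.mem_union_left _ hx) hxq
  have hCcol : IntervalColorable (SimpleGraph.fromEdgeSet (C : Set (Sym2 V))) := by
    have hCeq : (C : Set (Sym2 V)) = ⋃ p ∈ F, bset p.1 p.2 := by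
      ext e
      simp only [Finset.mem_coe, hC, Finset.mem_biUnion, Set.mem_iUnion, bset_def,
        Set.mem_setOf_eq]
      constructor
      · rintro ⟨p, hp, hep⟩
        exact ⟨p, hp, (hbmem p e).1 hep⟩
      · rintro ⟨p, hp, hx⟩
        exact ⟨p, hp, (hbmem p e).2 hx⟩
    rw [hCeq]
    exact ic_biclique_union F (fun p hp => (hFvalid.1 p hp).2.2.1) hFvalid.2
  refine ⟨C, hCsub, hCcol, ?_⟩
  -- final size computation
  have hFc : m + 1 ≤ F.card * t := by
    rw [hFW] at hWbig
    nlinarith [hWbig]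
  have hCc : (m + 1) * t ≤ C.card := by
    rw [hCcard]
    calc (m + 1) * t ≤ (F.card * t) * t := Nat.mul_le_mul_right t hFc
      _ = F.card * (t * t) := by ring
  have hns : n * s ^ 2 ≤ 8 * ((m + 1) * t) := by
    have h8 : n < 8 * s ^ 2 * (m + 1) := by
      have hdm := Nat.div_add_mod n (8 * s ^ 2)
      have hmod := Nat.mod_lt n (show 0 < 8 * s ^ 2 by positivity)
      rw [← hm] at hdm
      nlinarith [hdm, hmod]
    calc n * s ^ 2 ≤ (8 * s ^ 2 * (m + 1)) * s ^ 2 := Nat.mul_le_mul_right _ (le_of_lt h8)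
      _ = 8 * ((m + 1) * (s ^ 2 * s ^ 2)) := by ring
      _ = 8 * ((m + 1) * t) := by rw [ht]; ring
  calc n * s ^ 2 / 8 ≤ 8 * ((m + 1) * t) / 8 := Nat.div_le_div_right hns
    _ = (m + 1) * t := Nat.mul_div_cancel_left _ (by norm_num)
    _ ≤ C.card := hCc

lemma sparse_base (s : ℕ) (hs : 2 ≤ s) (G : SimpleGraph V)
    (hsparse : G.edgeFinset.card ≤ (Fintype.card V) ^ 2 / s ^ 2) :
    IntervalThicknessLE G (4 * ((Fintype.card V) / s + 1) + 3) := by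
  set n := Fintype.card V with hnn
  set q := n / s with hq
  set Dth := q + 1 with hDth
  clear_value n q Dth
  set H := Finset.univ.filter (fun v => Dth ≤ G.degree v) with hH
  set Del : Set (Sym2 V) := {e | ∃ a ∈ H, a ∈ e} with hDel
  -- degree bound after deleting all star edges at H
  have hdeg' : ∀ v : V, (((G.deleteEdges Del).edgeFinset).filter (fun e => v ∈ e)).card ≤ Dth := by
    intro v
    by_cases hv : v ∈ H
    · have hemp : ((G.deleteEdges Del).edgeFinset).filter (fun e => v ∈ e) = ∅ := by
        rw [Finset.eq_empty_iff_forall_notMem]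
        intro e he
        obtain ⟨hee, hve⟩ := Finset.mem_filter.1 he
        rw [SimpleGraph.mem_edgeFinset, SimpleGraph.edgeSet_deleteEdges] at hee
        exact hee.2 ⟨v, hv, hve⟩
      rw [hemp]
      simp
    · have hsub : ((G.deleteEdges Del).edgeFinset).filter (fun e => v ∈ e) ⊆
          G.edgeFinset.filter (fun e => v ∈ e) := by
        intro e he
        obtain ⟨hee, hve⟩ := Finset.mem_filter.1 he
        rw [SimpleGraph.mem_edgeFinset, SimpleGraph.edgeSet_deleteEdges] at hee
        exact Finset.mem_filter.2 ⟨SimpleGraph.mem_edgeFinset.2 hee.1, hve⟩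
      have hcard := Finset.card_le_card hsub
      have hinc : (G.edgeFinset.filter (fun e => v ∈ e)).card = G.degree v := by
        rw [← SimpleGraph.incidenceFinset_eq_filter, SimpleGraph.card_incidenceFinset_eq_degree]
      have hdv : G.degree v < Dth := by
        by_contra hge
        push_neg at hge
        exact hv (Finset.mem_filter.2 ⟨Finset.mem_univ _, hge⟩)
      omega
  -- greedy coloring of the rest
  obtain ⟨f, hf⟩ := greedy Dth ((G.deleteEdges Del).edgeFinset) hdeg'
  have hthick' : IntervalThicknessLE (G.deleteEdges Del) (2 * Dth + 1) := by
    refine ⟨f, fun i => ?_⟩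
    apply ic_of_pairwise_disjoint
    rintro e ⟨he, hei⟩ e' ⟨he', hei'⟩ hne v hv hv'
    exact hf e (SimpleGraph.mem_edgeFinset.2 he) e' (SimpleGraph.mem_edgeFinset.2 he')
      hne (hei.trans hei'.symm) v hv hv'
  have hpeel := starpeel H G (2 * Dth + 1) hthick'
  -- bound the number of high-degree vertices
  have hHcard : H.card ≤ 2 * (q + 1) := by
    have hsumH : H.card * Dth ≤ ∑ v ∈ H, G.degree v := by
      have h := Finset.card_nsmul_le_sum H _ Dth
        (fun v hv => (Finset.mem_filter.1 hv).2)
      rwa [smul_eq_mul] at h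
    have hsumall : ∑ v ∈ H, G.degree v ≤ ∑ v, G.degree v :=
      Finset.sum_le_sum_of_subset (Finset.subset_univ H)
    have htwice := SimpleGraph.sum_degrees_eq_twice_card_edges G
    have hq2 : n ^ 2 / s ^ 2 ≤ (q + 1) ^ 2 := by
      have h1 : n < s * (q + 1) := by
        have hdm := Nat.div_add_mod n s
        have hmod := Nat.mod_lt n (show 0 < s by omega)
        rw [← hq] at hdm
        nlinarith [hdm, hmod]
      have h2 : n ^ 2 ≤ s ^ 2 * (q + 1) ^ 2 := by nlinarith [h1]
      exact Nat.div_le_of_le_mul h2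
    have hcomb : H.card * (q + 1) ≤ 2 * (q + 1) ^ 2 := by
      calc H.card * (q + 1) = H.card * Dth := by rw [hDth]
        _ ≤ ∑ v ∈ H, G.degree v := hsumH
        _ ≤ ∑ v, G.degree v := hsumall
        _ = 2 * G.edgeFinset.card := htwice
        _ ≤ 2 * (n ^ 2 / s ^ 2) := Nat.mul_le_mul_left 2 hsparse
        _ ≤ 2 * (q + 1) ^ 2 := Nat.mul_le_mul_left 2 hq2
    have hqpos : 0 < q + 1 := by omega
    have hcomb2 : H.card * (q + 1) ≤ (2 * (q + 1)) * (q + 1) := by nlinarith [hcomb]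
    exact Nat.le_of_mul_le_mul_right hcomb2 hqpos
  refine thickness_mono hpeel ?_
  omega

lemma main_ind (s : ℕ) (hs : 2 ≤ s) (hnb : Nb s ≤ Fintype.card V) :
    ∀ (j : ℕ) (G : SimpleGraph V),
      G.edgeFinset.card ≤ (Fintype.card V) ^ 2 / s ^ 2
        + j * ((Fintype.card V) * s ^ 2 / 8) →
      IntervalThicknessLE G (4 * ((Fintype.card V) / s + 1) + 3 + j) := by
  intro j
  induction j with
  | zero =>
    intro G hG
    exact sparse_base s hs G (by simpa using hG)
  | succ j ih =>
    intro G hG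
    by_cases hsp : G.edgeFinset.card ≤ (Fintype.card V) ^ 2 / s ^ 2
    · exact thickness_mono (sparse_base s hs G hsp) (Nat.le_add_right _ _)
    · push_neg at hsp
      obtain ⟨C, hCsub, hCcol, hCcard⟩ := extract s hs G hnb (le_of_lt hsp)
      have hCfin : C ⊆ G.edgeFinset := fun e he =>
        SimpleGraph.mem_edgeFinset.2 (hCsub he)
      have hEcard : (G.deleteEdges (C : Set (Sym2 V))).edgeFinset.card
          = G.edgeFinset.card - C.card := by
        rw [SimpleGraph.edgeFinset_deleteEdges, Finset.card_sdiff_of_subset hCfin]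
      have hstep : (G.deleteEdges (C : Set (Sym2 V))).edgeFinset.card
          ≤ (Fintype.card V) ^ 2 / s ^ 2 + j * ((Fintype.card V) * s ^ 2 / 8) := by
        rw [hEcard]
        have hG' : G.edgeFinset.card ≤ (Fintype.card V) ^ 2 / s ^ 2
            + (j * ((Fintype.card V) * s ^ 2 / 8) + (Fintype.card V) * s ^ 2 / 8) := by
          refine le_trans hG (le_of_eq ?_)
          ring
        calc G.edgeFinset.card - C.card
            ≤ G.edgeFinset.card - (Fintype.card V) * s ^ 2 / 8 :=
              Nat.sub_le_sub_left hCcard _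
          _ ≤ ((Fintype.card V) ^ 2 / s ^ 2
              + (j * ((Fintype.card V) * s ^ 2 / 8) + (Fintype.card V) * s ^ 2 / 8))
              - (Fintype.card V) * s ^ 2 / 8 := Nat.sub_le_sub_right hG' _
          _ = (Fintype.card V) ^ 2 / s ^ 2 + j * ((Fintype.card V) * s ^ 2 / 8) := by
              rw [← Nat.add_assoc, Nat.add_sub_cancel]
      have hrec := ih (G.deleteEdges (C : Set (Sym2 V))) (by convert hstep)
      have hcol2 : IntervalColorable
          (SimpleGraph.fromEdgeSet (G.edgeSet ∩ (C : Set (Sym2 V)))) := by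
        rw [Set.inter_eq_self_of_subset_right hCsub]
        exact hCcol
      have := thickness_add hcol2 hrec
      exact thickness_mono this (Nat.le_of_eq (by ring))

end IT

set_option maxHeartbeats 2000000 in
/-- The maximum interval thickness of an `n`-vertex graph is `o(n)`. -/
theorem stmt13 (δ : ℝ) (hδ : 0 < δ) :
    ∃ N : ℕ, ∀ n : ℕ, N ≤ n → ∀ G : SimpleGraph (Fin n),
      ∃ k : ℕ, (k : ℝ) ≤ δ * n ∧ IntervalThicknessLE G k := by
  classical
  set s : ℕ := max 2 (⌈(40 : ℝ)/δ⌉₊ + 1) with hsdef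
  have hs : 2 ≤ s := le_max_left _ _
  have hs2max : (⌈(40 : ℝ)/δ⌉₊ + 1 : ℕ) ≤ s := le_max_right _ _
  clear_value s
  refine ⟨max (IT.Nb s) (⌈(46 : ℝ)/δ⌉₊ + 14), fun n hn G => ?_⟩
  have hnb : IT.Nb s ≤ n := le_trans (le_max_left _ _) hn
  have hn14 : 14 ≤ n := by
    have h := le_trans (le_max_right _ _) hn
    omega
  have hcard : Fintype.card (Fin n) = n := Fintype.card_fin n
  have h2e : 2 * G.edgeFinset.card ≤ n * n := by
    rw [← SimpleGraph.sum_degrees_eq_twice_card_edges G]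
    have hb := Finset.sum_le_card_nsmul Finset.univ (fun v => G.degree v) n
      (fun v _ => by have := G.degree_lt_card_verts v; omega)
    rwa [smul_eq_mul, Finset.card_univ, hcard] at hb
  have hspos : 0 < s := by omega
  have hf1 : n + 1 ≤ s ^ 2 * (n / s ^ 2 + 1) := by
    have hdm := Nat.div_add_mod n (s ^ 2)
    have hmod := Nat.mod_lt n (show 0 < s ^ 2 by positivity)
    nlinarith [hdm, hmod]
  have hf2 : n * s ^ 2 ≤ 8 * (n * s ^ 2 / 8) + 7 := by omega
  have hf3 : n / s ^ 2 ≤ n := Nat.div_le_self _ _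
  have hint1 : n * (n + 1) ≤ n * (s ^ 2 * (n / s ^ 2 + 1)) := Nat.mul_le_mul_left _ hf1
  have hint2 : (n * s ^ 2) * (n / s ^ 2 + 1) ≤ (8 * (n * s ^ 2 / 8) + 7) * (n / s ^ 2 + 1) :=
    Nat.mul_le_mul_right _ hf2
  have hint3 : n * (s ^ 2 * (n / s ^ 2 + 1)) = (n * s ^ 2) * (n / s ^ 2 + 1) := by ring
  have hint4 : 14 * n ≤ n * n := Nat.mul_le_mul_right n hn14
  have hkey : G.edgeFinset.card ≤ (16 * (n / s ^ 2) + 16) * (n * s ^ 2 / 8) := by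
    nlinarith [hint1, hint2, hint3, hint4, hf3, h2e]
  have hedge : G.edgeFinset.card ≤ (Fintype.card (Fin n)) ^ 2 / s ^ 2
      + (16 * (n / s ^ 2) + 16) * ((Fintype.card (Fin n)) * s ^ 2 / 8) := by
    rw [hcard]
    exact le_trans hkey (Nat.le_add_left _ _)
  have hthick := IT.main_ind s hs (by rw [hcard]; exact hnb) (16 * (n / s ^ 2) + 16) G hedge
  rw [hcard] at hthick
  refine ⟨4 * (n / s + 1) + 3 + (16 * (n / s ^ 2) + 16), ?_, hthick⟩
  have hu21 : n / s ^ 2 ≤ n / s := Nat.div_le_div_left (by nlinarith [hs]) (by omega)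
  have hknat : 4 * (n / s + 1) + 3 + (16 * (n / s ^ 2) + 16) ≤ 20 * (n / s) + 23 := by
    linarith [hu21]
  have hsle : (40 : ℝ) / δ ≤ (s : ℝ) := by
    have h1 : (40:ℝ)/δ ≤ (⌈(40:ℝ)/δ⌉₊ : ℝ) := Nat.le_ceil _
    have h2 : (⌈(40:ℝ)/δ⌉₊ + 1 : ℕ) ≤ s := hs2max
    have h2' : ((⌈(40:ℝ)/δ⌉₊ + 1 : ℕ) : ℝ) ≤ (s:ℝ) := Nat.cast_le.2 h2
    push_cast at h2'
    linarith
  have hspos' : (0:ℝ) < s := by exact_mod_cast hspos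
  have hnd : (46 : ℝ) / δ ≤ (n : ℝ) := by
    have h1 : (46:ℝ)/δ ≤ (⌈(46:ℝ)/δ⌉₊ : ℝ) := Nat.le_ceil _
    have h2 : (⌈(46:ℝ)/δ⌉₊ + 14 : ℕ) ≤ n := le_trans (le_max_right _ _) hn
    have h2' := (Nat.cast_le (α := ℝ)).2 h2
    push_cast at h2'
    linarith
  have hc1 : ((20 * (n / s) + 23 : ℕ) : ℝ) ≤ 20 * ((n:ℝ)/(s:ℝ)) + 23 := by
    push_cast
    have h := Nat.cast_div_le (α := ℝ) (m := n) (n := s)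
    linarith
  have hc2 : 20 * ((n:ℝ)/(s:ℝ)) ≤ δ/2 * n := by
    have h40 : 40 ≤ (s:ℝ) * δ := (div_le_iff₀ hδ).1 hsle
    have hn0 : (0:ℝ) ≤ n := Nat.cast_nonneg n
    calc 20 * ((n:ℝ)/(s:ℝ)) = (20 * n)/(s:ℝ) := by ring
      _ ≤ δ/2 * n := by
          rw [div_le_iff₀ hspos']
          nlinarith [mul_le_mul_of_nonneg_left h40 hn0]
  have hc3 : (23:ℝ) ≤ δ/2 * n := by
    have h46 : 46 ≤ (n:ℝ) * δ := (div_le_iff₀ hδ).1 hnd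
    linarith
  calc ((4 * (n / s + 1) + 3 + (16 * (n / s ^ 2) + 16) : ℕ) : ℝ)
      ≤ ((20 * (n / s) + 23 : ℕ) : ℝ) := Nat.cast_le.2 hknat
    _ ≤ 20 * ((n:ℝ)/(s:ℝ)) + 23 := hc1
    _ ≤ δ/2 * n + δ/2 * n := by linarith [hc2, hc3]
    _ = δ * n := by ring
end
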